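/- Let P₅ be the pentagon and J = (a₁,…,a₅) a vector of positive integers. The number of Davis–Januszkiewicz equivalence classes of small covers over P₅(J) = [a₁,a₃,a₅,a₂,a₄] is 2^{a₁+a₄−1} + 2^{a₂+a₅−1} + 2^{a₃+a₁−1} + 2^{a₄+a₂−1} + 2^{a₅+a₃−1} − 5. -/

import Mathlib

set_option linter.unreachableTactic false
set_option linter.unnecessarySeqFocus false
set_option linter.unusedTactic false


variable {V : Type*}

/-- `S` is a minimal non-face of `K`: it is not a face, but every proper subset is. -/
def MinNonFace (K : Set (Finset V)) (S : Finset V) : Prop :=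
  S ∉ K ∧ ∀ T ⊂ S, T ∈ K

/-- The full fiber of `S ⊆ V` in the vertex set `Σ i, Fin (J i)` of `K(J)`. -/
def fullCopy (J : V → ℕ) (S : Finset V) : Finset (Σ i : V, Fin (J i)) :=
  S.sigma fun _ => Finset.univ

/-- The simplicial complex `K(J)`: a subset of `Σ i, Fin (J i)` is a face iff it
contains no full fiber of a minimal non-face of `K`. -/
def wedgeJ (K : Set (Finset V)) (J : V → ℕ) : Set (Finset (Σ i : V, Fin (J i))) :=
  {τ | ∀ S : Finset V, MinNonFace K S → ¬ fullCopy J S ⊆ τ}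

/-- The boundary complex of the pentagon `P₅`: the 5-cycle on `ℤ₅`, whose faces are the
subsets of the edges `{i, i+1}`. -/
def pentagonComplex : Set (Finset (ZMod 5)) :=
  {σ | ∃ i : ZMod 5, σ ⊆ {i, i + 1}}

/-- `lam` is a non-singular `ℤ₂`-characteristic map on `∂(P₅(a))* = K₅(a)`:
the vectors assigned to the vertices of every face are linearly independent over `ℤ₂`. -/
def IsNonsingularZ2 (a : ZMod 5 → ℕ)
    (lam : (Σ i : ZMod 5, Fin (a i)) → (Fin ((∑ i : ZMod 5, a i) - 3) → ZMod 2)) :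
    Prop :=
  ∀ σ ∈ wedgeJ pentagonComplex a, LinearIndependent (ZMod 2) (fun w : σ => lam w.1)

namespace PW

lemma zmod5_cases (i : ZMod 5) : i = 0 ∨ i = 1 ∨ i = 2 ∨ i = 3 ∨ i = 4 := by
  revert i; decide

lemma zmod2_cases (c : ZMod 2) : c = 0 ∨ c = 1 := by revert c; decide

lemma minNonFace_iff (S : Finset (ZMod 5)) :
    MinNonFace pentagonComplex S ↔ ∃ i : ZMod 5, S = {i, i + 2} := by
  have : ∀ T : Finset (ZMod 5), T ∈ pentagonComplex ↔ ∃ i : ZMod 5, T ⊆ {i, i+1} :=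
    fun T => Iff.rfl
  simp only [MinNonFace, this]
  revert S; decide

variable (a : ZMod 5 → ℕ) (ha : ∀ i, 0 < a i)

abbrev W := (i : ZMod 5) × Fin (a i)

abbrev nn : ℕ := (∑ i : ZMod 5, a i) - 3

abbrev M := Fin (nn a) → ZMod 2

/-- top vertex of fiber `i` -/
def wt (i : ZMod 5) : W a := ⟨i, ⟨a i - 1, Nat.sub_lt (ha i) one_pos⟩⟩

/-- the fixed facet -/
def fac : Finset (W a) := Finset.univ \ {wt a ha 2, wt a ha 3, wt a ha 4}

lemma mem_fac_iff (w : W a) :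
    w ∈ fac a ha ↔ w ≠ wt a ha 2 ∧ w ≠ wt a ha 3 ∧ w ≠ wt a ha 4 := by
  simp [fac, not_or]

lemma wt_ne_of_fst_ne {i j : ZMod 5} (w : Fin (a i)) (h : i ≠ j) :
    (⟨i, w⟩ : W a) ≠ wt a ha j := by
  intro hc
  exact h (congrArg Sigma.fst hc)

lemma mem_fac_of_fst (i : ZMod 5) (hi2 : i ≠ 2) (hi3 : i ≠ 3) (hi4 : i ≠ 4) (x : Fin (a i)) :
    (⟨i, x⟩ : W a) ∈ fac a ha := by
  rw [mem_fac_iff]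
  exact ⟨wt_ne_of_fst_ne a ha x hi2, wt_ne_of_fst_ne a ha x hi3, wt_ne_of_fst_ne a ha x hi4⟩

lemma not_mem_fac_iff (w : W a) :
    w ∉ fac a ha ↔ w = wt a ha 2 ∨ w = wt a ha 3 ∨ w = wt a ha 4 := by
  rw [mem_fac_iff]; tauto

lemma wt_not_mem_fac (j : ZMod 5) (hj : j = 2 ∨ j = 3 ∨ j = 4) : wt a ha j ∉ fac a ha := by
  rw [not_mem_fac_iff]
  rcases hj with h | h | h <;> subst h <;> simp

include ha in
lemma sum_ge_five : 5 ≤ ∑ i : ZMod 5, a i := by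
  have : ∑ i : ZMod 5, 1 ≤ ∑ i : ZMod 5, a i :=
    Finset.sum_le_sum fun i _ => ha i
  simpa using this

lemma card_fac : (fac a ha).card = nn a := by
  have h23 : wt a ha 2 ≠ wt a ha 3 := by
    intro h; exact (by decide : (2 : ZMod 5) ≠ 3) (congrArg Sigma.fst h)
  have h24 : wt a ha 2 ≠ wt a ha 4 := by
    intro h; exact (by decide : (2 : ZMod 5) ≠ 4) (congrArg Sigma.fst h)
  have h34 : wt a ha 3 ≠ wt a ha 4 := by
    intro h; exact (by decide : (3 : ZMod 5) ≠ 4) (congrArg Sigma.fst h)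
  have hcard3 : ({wt a ha 2, wt a ha 3, wt a ha 4} : Finset (W a)).card = 3 := by
    rw [Finset.card_insert_of_notMem (by simp [h23, h24]),
      Finset.card_insert_of_notMem (by simp [h34]), Finset.card_singleton]
  have huniv : (Finset.univ : Finset (W a)).card = ∑ i : ZMod 5, a i := by
    simp [Finset.card_univ]
  rw [fac, Finset.card_sdiff_of_subset (Finset.subset_univ _), hcard3, huniv]

/-- enumeration of the facet -/
noncomputable def ee : {w : W a // w ∈ fac a ha} ≃ Fin (nn a) :=
  (fac a ha).equivFinOfCardEq (card_fac a ha)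

/-- coordinate of a vector at a facet vertex -/
noncomputable def cd (v : M a) (w : W a) (h : w ∈ fac a ha) : ZMod 2 :=
  v (ee a ha ⟨w, h⟩)

lemma cd_ext {v v' : M a}
    (h : ∀ (i : ZMod 5) (x : Fin (a i)) (hm : (⟨i, x⟩ : W a) ∈ fac a ha),
      cd a ha v ⟨i, x⟩ hm = cd a ha v' ⟨i, x⟩ hm) : v = v' := by
  funext k
  have hk : ee a ha ((ee a ha).symm k) = k := (ee a ha).apply_symm_apply k
  set w := (ee a ha).symm k with hw
  have h1 : v k = cd a ha v ⟨(w : W a).1, (w : W a).2⟩ w.2 := by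
    simp only [cd]
    congr 1
    rw [← hk]
  have h2 : v' k = cd a ha v' ⟨(w : W a).1, (w : W a).2⟩ w.2 := by
    simp only [cd]
    congr 1
    rw [← hk]
  rw [h1, h2, h]

lemma cd_add (v v' : M a) (w : W a) (h : w ∈ fac a ha) :
    cd a ha (v + v') w h = cd a ha v w h + cd a ha v' w h := rfl

lemma cd_smul (c : ZMod 2) (v : M a) (w : W a) (h : w ∈ fac a ha) :
    cd a ha (c • v) w h = c * cd a ha v w h := rfl


lemma diag_minNonFace (i : ZMod 5) : MinNonFace pentagonComplex {i, i + 2} :=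
  (minNonFace_iff _).2 ⟨i, rfl⟩

lemma mem_fullCopy (w : W a) (S : Finset (ZMod 5)) :
    w ∈ fullCopy a S ↔ w.1 ∈ S := by
  obtain ⟨i, x⟩ := w
  simp [fullCopy, Finset.mem_sigma]

lemma diag_meets (i : ZMod 5) :
    ∃ j : ZMod 5, (j = 2 ∨ j = 3 ∨ j = 4) ∧ (j = i ∨ j = i + 2) := by
  revert i; decide

lemma fac_mem_wedge : (fac a ha : Finset (W a)) ∈ wedgeJ pentagonComplex a := by
  intro S hS hsub
  obtain ⟨i, rfl⟩ := (minNonFace_iff S).1 hS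
  obtain ⟨j, hj234, hji⟩ := diag_meets i
  have hmem : wt a ha j ∈ fullCopy a {i, i + 2} := by
    rw [mem_fullCopy]
    rcases hji with h | h <;> simp [wt, h]
  exact wt_not_mem_fac a ha j hj234 (hsub hmem)

/-- The normalized map determined by the three free vectors. -/
noncomputable def Phi (v : M a × M a × M a) : W a → M a := fun w =>
  if _h2 : w = wt a ha 2 then v.1 else if _h3 : w = wt a ha 3 then v.2.1
  else if _h4 : w = wt a ha 4 then v.2.2
  else Pi.single (ee a ha ⟨w, by rw [mem_fac_iff]; exact ⟨_h2, _h3, _h4⟩⟩) 1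

lemma wt_ne_wt {i j : ZMod 5} (h : i ≠ j) : wt a ha i ≠ wt a ha j := by
  intro hc; exact h (congrArg Sigma.fst hc)

@[simp] lemma Phi_wt2 (v : M a × M a × M a) : Phi a ha v (wt a ha 2) = v.1 := by
  simp [Phi]

@[simp] lemma Phi_wt3 (v : M a × M a × M a) : Phi a ha v (wt a ha 3) = v.2.1 := by
  rw [Phi, dif_neg (wt_ne_wt a ha (by decide)), dif_pos rfl]

@[simp] lemma Phi_wt4 (v : M a × M a × M a) : Phi a ha v (wt a ha 4) = v.2.2 := by
  rw [Phi, dif_neg (wt_ne_wt a ha (by decide)), dif_neg (wt_ne_wt a ha (by decide)),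
    dif_pos rfl]

lemma Phi_mem (v : M a × M a × M a) (w : W a) (h : w ∈ fac a ha) :
    Phi a ha v w = Pi.single (ee a ha ⟨w, h⟩) 1 := by
  obtain ⟨h2, h3, h4⟩ := (mem_fac_iff a ha w).1 h
  rw [Phi, dif_neg h2, dif_neg h3, dif_neg h4]

/-- coefficient function on ZMod 5 -/
def cc (c2 c3 c4 : ZMod 2) (i : ZMod 5) : ZMod 2 :=
  if i = 2 then c2 else if i = 3 then c3 else if i = 4 then c4 else 0

@[simp] lemma cc_two (c2 c3 c4 : ZMod 2) : cc c2 c3 c4 2 = c2 := rfl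
@[simp] lemma cc_three (c2 c3 c4 : ZMod 2) : cc c2 c3 c4 3 = c3 := rfl
@[simp] lemma cc_four (c2 c3 c4 : ZMod 2) : cc c2 c3 c4 4 = c4 := rfl

/-- fiber `i` is fully "lit" -/
def Lit (c2 c3 c4 : ZMod 2) (u : M a) (i : ZMod 5) : Prop :=
  (∀ (x : Fin (a i)) (h : (⟨i, x⟩ : W a) ∈ fac a ha), cd a ha u ⟨i, x⟩ h = 1) ∧
  (∀ x : Fin (a i), (⟨i, x⟩ : W a) ∉ fac a ha → cc c2 c3 c4 i = 1)

def uu (v : M a × M a × M a) (c2 c3 c4 : ZMod 2) : M a :=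
  c2 • v.1 + c3 • v.2.1 + c4 • v.2.2

def Crit (v : M a × M a × M a) : Prop :=
  ∀ c2 c3 c4 : ZMod 2, ¬(c2 = 0 ∧ c3 = 0 ∧ c4 = 0) →
    ∃ i : ZMod 5, Lit a ha c2 c3 c4 (uu a v c2 c3 c4) i ∧
      Lit a ha c2 c3 c4 (uu a v c2 c3 c4) (i + 2)

noncomputable def Gg (σ : Finset (W a)) (g : {w : W a // w ∈ σ} → ZMod 2) :
    W a → ZMod 2 := fun x => if h : x ∈ σ then g ⟨x, h⟩ else 0

lemma sum_coef_single (G : W a → ZMod 2) :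
    (∑ ws : {w : W a // w ∈ fac a ha}, G ↑ws • (Pi.single (ee a ha ws) 1 : M a))
      = fun k => G ↑((ee a ha).symm k) := by
  have h1 : (∑ ws : {w : W a // w ∈ fac a ha}, G ↑ws • (Pi.single (ee a ha ws) 1 : M a))
      = ∑ ws : {w : W a // w ∈ fac a ha},
          (fun k => G ↑((ee a ha).symm k) • (Pi.single k 1 : M a)) (ee a ha ws) := by
    refine Finset.sum_congr rfl fun ws _ => ?_
    simp only [(ee a ha).symm_apply_apply]
  rw [h1, Equiv.sum_comp (ee a ha) (fun k => G ↑((ee a ha).symm k) • (Pi.single k 1 : M a))]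
  funext k
  rw [Finset.sum_apply]
  have h2 : ∀ k' : Fin (nn a),
      (G ↑((ee a ha).symm k') • (Pi.single k' 1 : M a)) k
        = if k' = k then G ↑((ee a ha).symm k') else 0 := by
    intro k'
    by_cases h : k' = k
    · subst h; simp
    · simp [Pi.single_apply, h, Ne.symm h]
  rw [Finset.sum_congr rfl fun k' _ => h2 k']
  simp

lemma sum_coef_single' (G : W a → ZMod 2) (k : Fin (nn a)) :
    (∑ ws : {w : W a // w ∈ fac a ha}, G ↑ws • (Pi.single (ee a ha ws) 1 : M a)) k
      = G ↑((ee a ha).symm k) := by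
  rw [sum_coef_single]

lemma zmod2_add_self (t : ZMod 2) : t + t = 0 := by revert t; decide

lemma sum_orbit (v : M a × M a × M a) (σ : Finset (W a)) (g : {w : W a // w ∈ σ} → ZMod 2) :
    (∑ ws : {w : W a // w ∈ σ}, g ws • Phi a ha v ↑ws)
      = (fun k => Gg a σ g ↑((ee a ha).symm k))
        + (Gg a σ g (wt a ha 2) • v.1 + Gg a σ g (wt a ha 3) • v.2.1
            + Gg a σ g (wt a ha 4) • v.2.2) := by
  classical
  have h1 : (∑ ws : {w : W a // w ∈ σ}, g ws • Phi a ha v ↑ws)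
      = ∑ x ∈ σ, Gg a σ g x • Phi a ha v x := by
    rw [← Finset.sum_attach σ (fun x => Gg a σ g x • Phi a ha v x),
      Finset.univ_eq_attach]
    refine Finset.sum_congr rfl fun ws _ => ?_
    congr 1
    simp [Gg]
  have h2 : ∑ x ∈ σ, Gg a σ g x • Phi a ha v x
      = ∑ x ∈ Finset.univ, Gg a σ g x • Phi a ha v x := by
    refine Finset.sum_subset (Finset.subset_univ σ) fun x _ hx => ?_
    rw [show Gg a σ g x = 0 from dif_neg hx, zero_smul]
  have h3 : ∑ x ∈ (fac a ha), Gg a σ g x • Phi a ha v x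
        + ∑ x ∈ ({wt a ha 2, wt a ha 3, wt a ha 4} : Finset (W a)),
            Gg a σ g x • Phi a ha v x
      = ∑ x ∈ Finset.univ, Gg a σ g x • Phi a ha v x :=
    Finset.sum_sdiff (Finset.subset_univ _)
  have h23 : wt a ha 2 ≠ wt a ha 3 := wt_ne_wt a ha (by decide)
  have h24 : wt a ha 2 ≠ wt a ha 4 := wt_ne_wt a ha (by decide)
  have h34 : wt a ha 3 ≠ wt a ha 4 := wt_ne_wt a ha (by decide)
  have h4 : ∑ x ∈ ({wt a ha 2, wt a ha 3, wt a ha 4} : Finset (W a)),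
        Gg a σ g x • Phi a ha v x
      = Gg a σ g (wt a ha 2) • v.1 + Gg a σ g (wt a ha 3) • v.2.1
          + Gg a σ g (wt a ha 4) • v.2.2 := by
    rw [Finset.sum_insert (by simp [h23, h24]), Finset.sum_insert (by simp [h34]),
      Finset.sum_singleton, Phi_wt2, Phi_wt3, Phi_wt4, add_assoc]
  have h5 : ∑ x ∈ (fac a ha), Gg a σ g x • Phi a ha v x
      = fun k => Gg a σ g ↑((ee a ha).symm k) := by
    rw [← Finset.sum_attach (fac a ha) (fun x => Gg a σ g x • Phi a ha v x),
      ← Finset.univ_eq_attach, ← sum_coef_single a ha (Gg a σ g)]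
    refine Finset.sum_congr rfl fun ws _ => ?_
    congr 1
    exact Phi_mem a ha v ↑ws ws.2
  rw [h1, h2, ← h3, h4, h5]

lemma crit_of_nonsingular (v : M a × M a × M a)
    (h : IsNonsingularZ2 a (Phi a ha v)) : Crit a ha v := by
  intro c2 c3 c4 hc
  by_contra hno
  rw [not_exists] at hno
  classical
  set u := uu a v c2 c3 c4 with hu
  set P : W a → Prop := fun w =>
    if hw : w ∈ fac a ha then cd a ha u w hw = 1 else cc c2 c3 c4 w.1 = 1 with hP
  set τ : Finset (W a) := Finset.univ.filter P with hτ
  have hmemτ : ∀ w : W a, w ∈ τ ↔ P w := by intro w; simp [hτ]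
  have hface : τ ∈ wedgeJ pentagonComplex a := by
    intro S hS hsub
    obtain ⟨i, rfl⟩ := (minNonFace_iff S).1 hS
    refine hno i ⟨?_, ?_⟩
    all_goals {
      constructor
      · intro x hx
        have hm : (⟨_, x⟩ : W a) ∈ τ := hsub ((mem_fullCopy a _ _).2 (by simp))
        have hPw := (hmemτ _).1 hm
        rw [hP] at hPw; dsimp only at hPw
        rwa [dif_pos hx] at hPw
      · intro x hx
        have hm : (⟨_, x⟩ : W a) ∈ τ := hsub ((mem_fullCopy a _ _).2 (by simp))
        have hPw := (hmemτ _).1 hm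
        rw [hP] at hPw; dsimp only at hPw
        rwa [dif_neg hx] at hPw
    }
  have hli := h τ hface
  rw [Fintype.linearIndependent_iff] at hli
  have hex : ∃ j : ZMod 5, (j = 2 ∨ j = 3 ∨ j = 4) ∧ cc c2 c3 c4 j = 1 := by
    rcases zmod2_cases c2 with h2 | h2
    · rcases zmod2_cases c3 with h3 | h3
      · rcases zmod2_cases c4 with h4 | h4
        · exact absurd ⟨h2, h3, h4⟩ hc
        · exact ⟨4, by simp, by simp [h4]⟩
      · exact ⟨3, by simp, by simp [h3]⟩
    · exact ⟨2, by simp, by simp [h2]⟩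
  obtain ⟨j, hj234, hcj⟩ := hex
  have hwtτ : wt a ha j ∈ τ := by
    rw [hmemτ, hP]; dsimp only
    rw [dif_neg (wt_not_mem_fac a ha j hj234)]
    exact hcj
  have hGval : ∀ w : W a, Gg a τ (fun _ => (1 : ZMod 2)) w = if P w then 1 else 0 := by
    intro w
    by_cases hw : w ∈ τ
    · rw [Gg, dif_pos hw, if_pos ((hmemτ w).1 hw)]
    · rw [Gg, dif_neg hw, if_neg (fun hPw => hw ((hmemτ w).2 hPw))]
  have hsum : (∑ ws : {w : W a // w ∈ τ}, (1 : ZMod 2) • Phi a ha v ↑ws) = 0 := by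
    rw [sum_orbit a ha v τ (fun _ => 1)]
    have hA : (fun k => Gg a τ (fun _ => (1 : ZMod 2)) ↑((ee a ha).symm k)) = u := by
      funext k
      rw [hGval]
      have hPiff : P ↑((ee a ha).symm k) ↔ u k = 1 := by
        rw [hP]; dsimp only
        rw [dif_pos ((ee a ha).symm k).2]
        have : cd a ha u ↑((ee a ha).symm k) ((ee a ha).symm k).2 = u k := by
          rw [cd]
          congr 1
          exact (ee a ha).apply_symm_apply k
        rw [this]
      rcases zmod2_cases (u k) with h0 | h1
      · rw [if_neg (fun hPw => by rw [h0] at hPiff; exact (by decide : (0:ZMod 2) ≠ 1) (hPiff.1 hPw)), h0]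
      · rw [if_pos (hPiff.2 h1), h1]
    have hB : ∀ j' : ZMod 5, (j' = 2 ∨ j' = 3 ∨ j' = 4) →
        Gg a τ (fun _ => (1 : ZMod 2)) (wt a ha j') = cc c2 c3 c4 j' := by
      intro j' hj'
      have hPiff : P (wt a ha j') ↔ cc c2 c3 c4 j' = 1 := by
        rw [hP]; dsimp only
        rw [dif_neg (wt_not_mem_fac a ha j' hj')]
        exact Iff.rfl
      rw [hGval]
      rcases zmod2_cases (cc c2 c3 c4 j') with h0 | h1
      · rw [if_neg (fun hPw => by
          rw [h0] at hPiff
          exact (by decide : (0 : ZMod 2) ≠ 1) (hPiff.1 hPw)), h0]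
      · rw [if_pos (hPiff.2 h1), h1]
    rw [hA, hB 2 (by simp), hB 3 (by simp), hB 4 (by simp), cc_two, cc_three, cc_four]
    funext k
    show u k + (c2 • v.1 + c3 • v.2.1 + c4 • v.2.2) k = 0
    rw [show (c2 • v.1 + c3 • v.2.1 + c4 • v.2.2) = u from rfl]
    exact zmod2_add_self (u k)
  have := hli (fun _ => 1) (by simpa using hsum) ⟨wt a ha j, hwtτ⟩
  exact (by decide : (1 : ZMod 2) ≠ 0) this

lemma nonsingular_of_crit (v : M a × M a × M a)
    (h : Crit a ha v) : IsNonsingularZ2 a (Phi a ha v) := by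
  intro σ hσ
  rw [Fintype.linearIndependent_iff]
  intro g hg
  classical
  have key0 := hg
  rw [sum_orbit a ha v σ g] at key0
  set G := Gg a σ g with hGdef
  set c2 := G (wt a ha 2) with hc2
  set c3 := G (wt a ha 3) with hc3
  set c4 := G (wt a ha 4) with hc4
  set u := uu a v c2 c3 c4 with hu
  have key : (fun k => G ↑((ee a ha).symm k)) + u = 0 := key0
  have hstar : ∀ (w : W a) (hw : w ∈ fac a ha), G w + cd a ha u w hw = 0 := by
    intro w hw
    have hk := congrFun key (ee a ha ⟨w, hw⟩)
    have h1 : ((ee a ha).symm (ee a ha ⟨w, hw⟩)) = ⟨w, hw⟩ := (ee a ha).symm_apply_apply _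
    simp only [Pi.add_apply, Pi.zero_apply] at hk
    rw [h1] at hk
    exact hk
  by_cases hc : c2 = 0 ∧ c3 = 0 ∧ c4 = 0
  · have hu0 : u = 0 := by
      rw [hu, uu, hc.1, hc.2.1, hc.2.2]
      simp
    intro ws
    by_cases hw : (↑ws : W a) ∈ fac a ha
    · have hs := hstar ↑ws hw
      rw [hu0] at hs
      have hGg : G ↑ws = g ws := by rw [hGdef, Gg, dif_pos ws.2]
      rw [hGg, show cd a ha (0 : M a) ↑ws hw = 0 from rfl, add_zero] at hs
      exact hs
    · have hgw : g ws = G ↑ws := by rw [hGdef, Gg, dif_pos ws.2]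
      obtain hw2 | hw3 | hw4 := (not_mem_fac_iff a ha ↑ws).1 hw
      · rw [hgw, hw2, ← hc2]; exact hc.1
      · rw [hgw, hw3, ← hc3]; exact hc.2.1
      · rw [hgw, hw4, ← hc4]; exact hc.2.2
  · exfalso
    obtain ⟨i, hli, hli2⟩ := h c2 c3 c4 hc
    refine hσ {i, i + 2} (diag_minNonFace i) ?_
    intro w hw
    have hw1 : w.1 = i ∨ w.1 = i + 2 := by
      have := (mem_fullCopy a w _).1 hw
      simpa using this
    have hlit : Lit a ha c2 c3 c4 u w.1 := by
      rcases hw1 with h1 | h1 <;> rw [h1] <;> assumption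
    by_cases hwf : w ∈ fac a ha
    · by_contra hwσ
      have hG0 : G w = 0 := dif_neg hwσ
      have hs := hstar w hwf
      rw [hG0, zero_add] at hs
      have h1 : cd a ha u ⟨w.1, w.2⟩ hwf = 1 := hlit.1 w.2 hwf
      rw [hs] at h1
      exact (by decide : (0 : ZMod 2) ≠ 1) h1
    · have h2 : cc c2 c3 c4 w.1 = 1 := hlit.2 w.2 hwf
      obtain hw2 | hw3 | hw4 := (not_mem_fac_iff a ha w).1 hwf
      · rw [hw2]
        by_contra hnσ
        have h0 : c2 = 0 := by rw [hc2, hGdef, Gg, dif_neg hnσ]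
        rw [hw2] at h2
        rw [show ((wt a ha 2).1 : ZMod 5) = 2 from rfl, cc_two, h0] at h2
        exact (by decide : (0 : ZMod 2) ≠ 1) h2
      · rw [hw3]
        by_contra hnσ
        have h0 : c3 = 0 := by rw [hc3, hGdef, Gg, dif_neg hnσ]
        rw [hw3] at h2
        rw [show ((wt a ha 3).1 : ZMod 5) = 3 from rfl, cc_three, h0] at h2
        exact (by decide : (0 : ZMod 2) ≠ 1) h2
      · rw [hw4]
        by_contra hnσ
        have h0 : c4 = 0 := by rw [hc4, hGdef, Gg, dif_neg hnσ]
        rw [hw4] at h2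
        rw [show ((wt a ha 4).1 : ZMod 5) = 4 from rfl, cc_four, h0] at h2
        exact (by decide : (0 : ZMod 2) ≠ 1) h2

lemma nonsingular_iff_crit (v : M a × M a × M a) :
    IsNonsingularZ2 a (Phi a ha v) ↔ Crit a ha v :=
  ⟨crit_of_nonsingular a ha v, nonsingular_of_crit a ha v⟩


/-- `u` is constant `t` on block `b` -/
def Bk (b : ZMod 5) (u : M a) (t : ZMod 2) : Prop :=
  ∀ (x : Fin (a b)) (h : (⟨b, x⟩ : W a) ∈ fac a ha), cd a ha u ⟨b, x⟩ h = t

def BkS (b : ZMod 5) (u u' : M a) : Prop :=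
  ∀ (x : Fin (a b)) (h : (⟨b, x⟩ : W a) ∈ fac a ha),
    cd a ha u ⟨b, x⟩ h + cd a ha u' ⟨b, x⟩ h = 1

def BkZ (b : ZMod 5) (u u' : M a) : Prop :=
  ∀ (x : Fin (a b)) (h : (⟨b, x⟩ : W a) ∈ fac a ha),
    cd a ha u ⟨b, x⟩ h + cd a ha u' ⟨b, x⟩ h = 0

def BkT (b : ZMod 5) (u u' u'' : M a) : Prop :=
  ∀ (x : Fin (a b)) (h : (⟨b, x⟩ : W a) ∈ fac a ha),
    cd a ha u ⟨b, x⟩ h + cd a ha u' ⟨b, x⟩ h + cd a ha u'' ⟨b, x⟩ h = 1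

lemma cd_uu (v : M a × M a × M a) (c2 c3 c4 : ZMod 2) (w : W a) (h : w ∈ fac a ha) :
    cd a ha (uu a v c2 c3 c4) w h
      = c2 * cd a ha v.1 w h + c3 * cd a ha v.2.1 w h + c4 * cd a ha v.2.2 w h := rfl

lemma lit_cc {c2 c3 c4 : ZMod 2} {u : M a} {i : ZMod 5}
    (hl : Lit a ha c2 c3 c4 u i) (hi : i = 2 ∨ i = 3 ∨ i = 4) : cc c2 c3 c4 i = 1 :=
  hl.2 (wt a ha i).2 (wt_not_mem_fac a ha i hi)

lemma lit01 {c2 c3 c4 : ZMod 2} {u : M a} (i : ZMod 5)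
    (hi2 : i ≠ 2) (hi3 : i ≠ 3) (hi4 : i ≠ 4)
    (h1 : ∀ (x : Fin (a i)) (h : (⟨i, x⟩ : W a) ∈ fac a ha), cd a ha u ⟨i, x⟩ h = 1) :
    Lit a ha c2 c3 c4 u i :=
  ⟨h1, fun x hx => absurd (mem_fac_of_fst a ha i hi2 hi3 hi4 x) hx⟩

lemma lit234 {c2 c3 c4 : ZMod 2} {u : M a} (i : ZMod 5) (hcc : cc c2 c3 c4 i = 1)
    (h1 : ∀ (x : Fin (a i)) (h : (⟨i, x⟩ : W a) ∈ fac a ha), cd a ha u ⟨i, x⟩ h = 1) :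
    Lit a ha c2 c3 c4 u i :=
  ⟨h1, fun _ _ => hcc⟩

/-- the five families -/
def F0 : Set (M a × M a × M a) := {v |
  Bk a ha 0 v.1 1 ∧ Bk a ha 1 v.1 1 ∧ Bk a ha 2 v.1 1 ∧ Bk a ha 3 v.1 0 ∧ Bk a ha 4 v.1 0 ∧
  Bk a ha 0 v.2.1 1 ∧ Bk a ha 1 v.2.1 0 ∧ Bk a ha 2 v.2.1 0 ∧ Bk a ha 3 v.2.1 1 ∧
    Bk a ha 4 v.2.1 0 ∧
  Bk a ha 1 v.2.2 1 ∧ Bk a ha 2 v.2.2 0 ∧ Bk a ha 4 v.2.2 1}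

def F1 : Set (M a × M a × M a) := {v |
  Bk a ha 0 v.1 1 ∧ Bk a ha 2 v.1 1 ∧ Bk a ha 3 v.1 0 ∧
  Bk a ha 0 v.2.1 1 ∧ BkS a ha 1 v.1 v.2.1 ∧ Bk a ha 2 v.2.1 0 ∧ Bk a ha 3 v.2.1 1 ∧
    BkZ a ha 4 v.1 v.2.1 ∧
  Bk a ha 0 v.2.2 0 ∧ Bk a ha 1 v.2.2 1 ∧ Bk a ha 2 v.2.2 0 ∧ Bk a ha 3 v.2.2 0 ∧
    Bk a ha 4 v.2.2 1}

def F2 : Set (M a × M a × M a) := {v |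
  Bk a ha 0 v.1 1 ∧ Bk a ha 1 v.1 0 ∧ Bk a ha 2 v.1 1 ∧ Bk a ha 3 v.1 0 ∧ Bk a ha 4 v.1 0 ∧
  Bk a ha 1 v.2.1 1 ∧ Bk a ha 3 v.2.1 1 ∧ Bk a ha 4 v.2.1 0 ∧
  BkS a ha 0 v.2.1 v.2.2 ∧ Bk a ha 1 v.2.2 1 ∧ BkZ a ha 2 v.2.1 v.2.2 ∧ Bk a ha 3 v.2.2 0 ∧
    Bk a ha 4 v.2.2 1}

def F3 : Set (M a × M a × M a) := {v |
  Bk a ha 0 v.1 1 ∧ Bk a ha 2 v.1 1 ∧ Bk a ha 4 v.1 0 ∧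
  Bk a ha 0 v.2.1 0 ∧ Bk a ha 1 v.2.1 1 ∧ Bk a ha 2 v.2.1 0 ∧ Bk a ha 3 v.2.1 1 ∧
    Bk a ha 4 v.2.1 0 ∧
  Bk a ha 0 v.2.2 1 ∧ Bk a ha 1 v.2.2 1 ∧ Bk a ha 2 v.2.2 0 ∧ Bk a ha 3 v.2.2 0 ∧
    Bk a ha 4 v.2.2 1}

def F4 : Set (M a × M a × M a) := {v |
  Bk a ha 0 v.1 1 ∧ Bk a ha 1 v.1 1 ∧ Bk a ha 2 v.1 1 ∧ Bk a ha 3 v.1 0 ∧ Bk a ha 4 v.1 0 ∧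
  ((Bk a ha 0 v.2.1 0 ∧ Bk a ha 1 v.2.1 1) ∨ (Bk a ha 0 v.2.1 1 ∧ Bk a ha 1 v.2.1 0)) ∧
    Bk a ha 3 v.2.1 1 ∧
  Bk a ha 0 v.2.2 1 ∧ Bk a ha 1 v.2.2 1 ∧ Bk a ha 2 v.2.2 0 ∧ Bk a ha 3 v.2.2 0 ∧
    Bk a ha 4 v.2.2 1}

lemma cond100 (v : M a × M a × M a) (hcrit : Crit a ha v) :
    (Bk a ha 0 v.1 1) ∧ (Bk a ha 2 v.1 1) := by
  obtain ⟨i, hA, hB⟩ := hcrit 1 0 0 (by decide)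
  rcases zmod5_cases i with h | h | h | h | h <;> subst h
  · rw [show ((0 : ZMod 5) + 2) = 2 from by decide] at hB
    exact ⟨(fun x h => by have hh := hA.1 x h; rw [cd_uu] at hh; simpa using hh), (fun x h => by have hh := hB.1 x h; rw [cd_uu] at hh; simpa using hh)⟩
  · rw [show ((1 : ZMod 5) + 2) = 3 from by decide] at hB
    exact absurd (lit_cc a ha hB (by decide)) (by decide)
  · rw [show ((2 : ZMod 5) + 2) = 4 from by decide] at hB
    exact absurd (lit_cc a ha hB (by decide)) (by decide)
  · rw [show ((3 : ZMod 5) + 2) = 0 from by decide] at hB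
    exact absurd (lit_cc a ha hA (by decide)) (by decide)
  · rw [show ((4 : ZMod 5) + 2) = 1 from by decide] at hB
    exact absurd (lit_cc a ha hA (by decide)) (by decide)

lemma cond010 (v : M a × M a × M a) (hcrit : Crit a ha v) :
    (Bk a ha 3 v.2.1 1) ∧ ((Bk a ha 0 v.2.1 1) ∨ (Bk a ha 1 v.2.1 1)) := by
  obtain ⟨i, hA, hB⟩ := hcrit 0 1 0 (by decide)
  rcases zmod5_cases i with h | h | h | h | h <;> subst h
  · rw [show ((0 : ZMod 5) + 2) = 2 from by decide] at hB
    exact absurd (lit_cc a ha hB (by decide)) (by decide)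
  · rw [show ((1 : ZMod 5) + 2) = 3 from by decide] at hB
    exact ⟨(fun x h => by have hh := hB.1 x h; rw [cd_uu] at hh; simpa using hh), Or.inr (fun x h => by have hh := hA.1 x h; rw [cd_uu] at hh; simpa using hh)⟩
  · rw [show ((2 : ZMod 5) + 2) = 4 from by decide] at hB
    exact absurd (lit_cc a ha hA (by decide)) (by decide)
  · rw [show ((3 : ZMod 5) + 2) = 0 from by decide] at hB
    exact ⟨(fun x h => by have hh := hA.1 x h; rw [cd_uu] at hh; simpa using hh), Or.inl (fun x h => by have hh := hB.1 x h; rw [cd_uu] at hh; simpa using hh)⟩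
  · rw [show ((4 : ZMod 5) + 2) = 1 from by decide] at hB
    exact absurd (lit_cc a ha hA (by decide)) (by decide)

lemma cond001 (v : M a × M a × M a) (hcrit : Crit a ha v) :
    (Bk a ha 1 v.2.2 1) ∧ (Bk a ha 4 v.2.2 1) := by
  obtain ⟨i, hA, hB⟩ := hcrit 0 0 1 (by decide)
  rcases zmod5_cases i with h | h | h | h | h <;> subst h
  · rw [show ((0 : ZMod 5) + 2) = 2 from by decide] at hB
    exact absurd (lit_cc a ha hB (by decide)) (by decide)
  · rw [show ((1 : ZMod 5) + 2) = 3 from by decide] at hB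
    exact absurd (lit_cc a ha hB (by decide)) (by decide)
  · rw [show ((2 : ZMod 5) + 2) = 4 from by decide] at hB
    exact absurd (lit_cc a ha hA (by decide)) (by decide)
  · rw [show ((3 : ZMod 5) + 2) = 0 from by decide] at hB
    exact absurd (lit_cc a ha hA (by decide)) (by decide)
  · rw [show ((4 : ZMod 5) + 2) = 1 from by decide] at hB
    exact ⟨(fun x h => by have hh := hB.1 x h; rw [cd_uu] at hh; simpa using hh), (fun x h => by have hh := hA.1 x h; rw [cd_uu] at hh; simpa using hh)⟩

lemma cond110 (v : M a × M a × M a) (hcrit : Crit a ha v) :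
    ((BkS a ha 0 v.1 v.2.1) ∧ (BkS a ha 2 v.1 v.2.1)) ∨ ((BkS a ha 1 v.1 v.2.1) ∧ (BkS a ha 3 v.1 v.2.1)) ∨ ((BkS a ha 0 v.1 v.2.1) ∧ (BkS a ha 3 v.1 v.2.1)) := by
  obtain ⟨i, hA, hB⟩ := hcrit 1 1 0 (by decide)
  rcases zmod5_cases i with h | h | h | h | h <;> subst h
  · rw [show ((0 : ZMod 5) + 2) = 2 from by decide] at hB
    exact Or.inl ⟨(fun x h => by have hh := hA.1 x h; rw [cd_uu] at hh; simpa using hh), (fun x h => by have hh := hB.1 x h; rw [cd_uu] at hh; simpa using hh)⟩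
  · rw [show ((1 : ZMod 5) + 2) = 3 from by decide] at hB
    exact Or.inr (Or.inl ⟨(fun x h => by have hh := hA.1 x h; rw [cd_uu] at hh; simpa using hh), (fun x h => by have hh := hB.1 x h; rw [cd_uu] at hh; simpa using hh)⟩)
  · rw [show ((2 : ZMod 5) + 2) = 4 from by decide] at hB
    exact absurd (lit_cc a ha hB (by decide)) (by decide)
  · rw [show ((3 : ZMod 5) + 2) = 0 from by decide] at hB
    exact Or.inr (Or.inr ⟨(fun x h => by have hh := hB.1 x h; rw [cd_uu] at hh; simpa using hh), (fun x h => by have hh := hA.1 x h; rw [cd_uu] at hh; simpa using hh)⟩)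
  · rw [show ((4 : ZMod 5) + 2) = 1 from by decide] at hB
    exact absurd (lit_cc a ha hA (by decide)) (by decide)

lemma cond011 (v : M a × M a × M a) (hcrit : Crit a ha v) :
    ((BkS a ha 1 v.2.1 v.2.2) ∧ (BkS a ha 3 v.2.1 v.2.2)) ∨ ((BkS a ha 0 v.2.1 v.2.2) ∧ (BkS a ha 3 v.2.1 v.2.2)) ∨ ((BkS a ha 1 v.2.1 v.2.2) ∧ (BkS a ha 4 v.2.1 v.2.2)) := by
  obtain ⟨i, hA, hB⟩ := hcrit 0 1 1 (by decide)
  rcases zmod5_cases i with h | h | h | h | h <;> subst h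
  · rw [show ((0 : ZMod 5) + 2) = 2 from by decide] at hB
    exact absurd (lit_cc a ha hB (by decide)) (by decide)
  · rw [show ((1 : ZMod 5) + 2) = 3 from by decide] at hB
    exact Or.inl ⟨(fun x h => by have hh := hA.1 x h; rw [cd_uu] at hh; simpa using hh), (fun x h => by have hh := hB.1 x h; rw [cd_uu] at hh; simpa using hh)⟩
  · rw [show ((2 : ZMod 5) + 2) = 4 from by decide] at hB
    exact absurd (lit_cc a ha hA (by decide)) (by decide)
  · rw [show ((3 : ZMod 5) + 2) = 0 from by decide] at hB
    exact Or.inr (Or.inl ⟨(fun x h => by have hh := hB.1 x h; rw [cd_uu] at hh; simpa using hh), (fun x h => by have hh := hA.1 x h; rw [cd_uu] at hh; simpa using hh)⟩)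
  · rw [show ((4 : ZMod 5) + 2) = 1 from by decide] at hB
    exact Or.inr (Or.inr ⟨(fun x h => by have hh := hB.1 x h; rw [cd_uu] at hh; simpa using hh), (fun x h => by have hh := hA.1 x h; rw [cd_uu] at hh; simpa using hh)⟩)

lemma cond101 (v : M a × M a × M a) (hcrit : Crit a ha v) :
    ((BkS a ha 0 v.1 v.2.2) ∧ (BkS a ha 2 v.1 v.2.2)) ∨ ((BkS a ha 2 v.1 v.2.2) ∧ (BkS a ha 4 v.1 v.2.2)) ∨ ((BkS a ha 1 v.1 v.2.2) ∧ (BkS a ha 4 v.1 v.2.2)) := by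
  obtain ⟨i, hA, hB⟩ := hcrit 1 0 1 (by decide)
  rcases zmod5_cases i with h | h | h | h | h <;> subst h
  · rw [show ((0 : ZMod 5) + 2) = 2 from by decide] at hB
    exact Or.inl ⟨(fun x h => by have hh := hA.1 x h; rw [cd_uu] at hh; simpa using hh), (fun x h => by have hh := hB.1 x h; rw [cd_uu] at hh; simpa using hh)⟩
  · rw [show ((1 : ZMod 5) + 2) = 3 from by decide] at hB
    exact absurd (lit_cc a ha hB (by decide)) (by decide)
  · rw [show ((2 : ZMod 5) + 2) = 4 from by decide] at hB
    exact Or.inr (Or.inl ⟨(fun x h => by have hh := hA.1 x h; rw [cd_uu] at hh; simpa using hh), (fun x h => by have hh := hB.1 x h; rw [cd_uu] at hh; simpa using hh)⟩)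
  · rw [show ((3 : ZMod 5) + 2) = 0 from by decide] at hB
    exact absurd (lit_cc a ha hA (by decide)) (by decide)
  · rw [show ((4 : ZMod 5) + 2) = 1 from by decide] at hB
    exact Or.inr (Or.inr ⟨(fun x h => by have hh := hB.1 x h; rw [cd_uu] at hh; simpa using hh), (fun x h => by have hh := hA.1 x h; rw [cd_uu] at hh; simpa using hh)⟩)

lemma cond111 (v : M a × M a × M a) (hcrit : Crit a ha v) :
    ((BkT a ha 0 v.1 v.2.1 v.2.2) ∧ (BkT a ha 2 v.1 v.2.1 v.2.2)) ∨ ((BkT a ha 1 v.1 v.2.1 v.2.2) ∧ (BkT a ha 3 v.1 v.2.1 v.2.2)) ∨ ((BkT a ha 2 v.1 v.2.1 v.2.2) ∧ (BkT a ha 4 v.1 v.2.1 v.2.2)) ∨ ((BkT a ha 0 v.1 v.2.1 v.2.2) ∧ (BkT a ha 3 v.1 v.2.1 v.2.2)) ∨ ((BkT a ha 1 v.1 v.2.1 v.2.2) ∧ (BkT a ha 4 v.1 v.2.1 v.2.2)) := by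
  obtain ⟨i, hA, hB⟩ := hcrit 1 1 1 (by decide)
  rcases zmod5_cases i with h | h | h | h | h <;> subst h
  · rw [show ((0 : ZMod 5) + 2) = 2 from by decide] at hB
    exact Or.inl ⟨(fun x h => by have hh := hA.1 x h; rw [cd_uu] at hh; simpa using hh), (fun x h => by have hh := hB.1 x h; rw [cd_uu] at hh; simpa using hh)⟩
  · rw [show ((1 : ZMod 5) + 2) = 3 from by decide] at hB
    exact Or.inr (Or.inl ⟨(fun x h => by have hh := hA.1 x h; rw [cd_uu] at hh; simpa using hh), (fun x h => by have hh := hB.1 x h; rw [cd_uu] at hh; simpa using hh)⟩)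
  · rw [show ((2 : ZMod 5) + 2) = 4 from by decide] at hB
    exact Or.inr (Or.inr (Or.inl ⟨(fun x h => by have hh := hA.1 x h; rw [cd_uu] at hh; simpa using hh), (fun x h => by have hh := hB.1 x h; rw [cd_uu] at hh; simpa using hh)⟩))
  · rw [show ((3 : ZMod 5) + 2) = 0 from by decide] at hB
    exact Or.inr (Or.inr (Or.inr (Or.inl ⟨(fun x h => by have hh := hB.1 x h; rw [cd_uu] at hh; simpa using hh), (fun x h => by have hh := hA.1 x h; rw [cd_uu] at hh; simpa using hh)⟩)))
  · rw [show ((4 : ZMod 5) + 2) = 1 from by decide] at hB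
    exact Or.inr (Or.inr (Or.inr (Or.inr ⟨(fun x h => by have hh := hB.1 x h; rw [cd_uu] at hh; simpa using hh), (fun x h => by have hh := hA.1 x h; rw [cd_uu] at hh; simpa using hh)⟩)))

lemma crit_of_mem_F0 (v : M a × M a × M a) (hv : v ∈ F0 a ha) : Crit a ha v := by
  obtain ⟨h1, h2, h3, h4, h5, h6, h7, h8, h9, h10, h11, h12, h13⟩ := hv
  intro c2 c3 c4 hc
  rcases zmod2_cases c2 with hc2 | hc2 <;> subst hc2 <;>
    rcases zmod2_cases c3 with hc3 | hc3 <;> subst hc3 <;>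
      rcases zmod2_cases c4 with hc4 | hc4 <;> subst hc4
  · exact absurd ⟨rfl, rfl, rfl⟩ hc
  · refine ⟨(4 : ZMod 5), ?_, ?_⟩
    · refine lit234 a ha _ (by decide) ?_
      intro x h
      rw [cd_uu]
      simp only [one_mul, zero_mul, zero_add, add_zero]
      rw [h13 x h] <;> decide
    · rw [show ((4 : ZMod 5) + 2) = 1 from by decide]
      refine lit01 a ha _ (by decide) (by decide) (by decide) ?_
      intro x h
      rw [cd_uu]
      simp only [one_mul, zero_mul, zero_add, add_zero]
      rw [h11 x h] <;> decide
  · refine ⟨(3 : ZMod 5), ?_, ?_⟩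
    · refine lit234 a ha _ (by decide) ?_
      intro x h
      rw [cd_uu]
      simp only [one_mul, zero_mul, zero_add, add_zero]
      rw [h9 x h] <;> decide
    · rw [show ((3 : ZMod 5) + 2) = 0 from by decide]
      refine lit01 a ha _ (by decide) (by decide) (by decide) ?_
      intro x h
      rw [cd_uu]
      simp only [one_mul, zero_mul, zero_add, add_zero]
      rw [h6 x h] <;> decide
  · refine ⟨(4 : ZMod 5), ?_, ?_⟩
    · refine lit234 a ha _ (by decide) ?_
      intro x h
      rw [cd_uu]
      simp only [one_mul, zero_mul, zero_add, add_zero]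
      rw [h10 x h, h13 x h] <;> decide
    · rw [show ((4 : ZMod 5) + 2) = 1 from by decide]
      refine lit01 a ha _ (by decide) (by decide) (by decide) ?_
      intro x h
      rw [cd_uu]
      simp only [one_mul, zero_mul, zero_add, add_zero]
      rw [h7 x h, h11 x h] <;> decide
  · refine ⟨(0 : ZMod 5), ?_, ?_⟩
    · refine lit01 a ha _ (by decide) (by decide) (by decide) ?_
      intro x h
      rw [cd_uu]
      simp only [one_mul, zero_mul, zero_add, add_zero]
      rw [h1 x h] <;> decide
    · rw [show ((0 : ZMod 5) + 2) = 2 from by decide]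
      refine lit234 a ha _ (by decide) ?_
      intro x h
      rw [cd_uu]
      simp only [one_mul, zero_mul, zero_add, add_zero]
      rw [h3 x h] <;> decide
  · refine ⟨(2 : ZMod 5), ?_, ?_⟩
    · refine lit234 a ha _ (by decide) ?_
      intro x h
      rw [cd_uu]
      simp only [one_mul, zero_mul, zero_add, add_zero]
      rw [h3 x h, h12 x h] <;> decide
    · rw [show ((2 : ZMod 5) + 2) = 4 from by decide]
      refine lit234 a ha _ (by decide) ?_
      intro x h
      rw [cd_uu]
      simp only [one_mul, zero_mul, zero_add, add_zero]
      rw [h5 x h, h13 x h] <;> decide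
  · refine ⟨(1 : ZMod 5), ?_, ?_⟩
    · refine lit01 a ha _ (by decide) (by decide) (by decide) ?_
      intro x h
      rw [cd_uu]
      simp only [one_mul, zero_mul, zero_add, add_zero]
      rw [h2 x h, h7 x h] <;> decide
    · rw [show ((1 : ZMod 5) + 2) = 3 from by decide]
      refine lit234 a ha _ (by decide) ?_
      intro x h
      rw [cd_uu]
      simp only [one_mul, zero_mul, zero_add, add_zero]
      rw [h4 x h, h9 x h] <;> decide
  · refine ⟨(2 : ZMod 5), ?_, ?_⟩
    · refine lit234 a ha _ (by decide) ?_
      intro x h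
      rw [cd_uu]
      simp only [one_mul, zero_mul, zero_add, add_zero]
      rw [h3 x h, h8 x h, h12 x h] <;> decide
    · rw [show ((2 : ZMod 5) + 2) = 4 from by decide]
      refine lit234 a ha _ (by decide) ?_
      intro x h
      rw [cd_uu]
      simp only [one_mul, zero_mul, zero_add, add_zero]
      rw [h5 x h, h10 x h, h13 x h] <;> decide

lemma crit_of_mem_F1 (v : M a × M a × M a) (hv : v ∈ F1 a ha) : Crit a ha v := by
  obtain ⟨h1, h2, h3, h4, h5, h6, h7, h8, h9, h10, h11, h12, h13⟩ := hv
  intro c2 c3 c4 hc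
  rcases zmod2_cases c2 with hc2 | hc2 <;> subst hc2 <;>
    rcases zmod2_cases c3 with hc3 | hc3 <;> subst hc3 <;>
      rcases zmod2_cases c4 with hc4 | hc4 <;> subst hc4
  · exact absurd ⟨rfl, rfl, rfl⟩ hc
  · refine ⟨(4 : ZMod 5), ?_, ?_⟩
    · refine lit234 a ha _ (by decide) ?_
      intro x h
      rw [cd_uu]
      simp only [one_mul, zero_mul, zero_add, add_zero]
      rw [h13 x h] <;> decide
    · rw [show ((4 : ZMod 5) + 2) = 1 from by decide]
      refine lit01 a ha _ (by decide) (by decide) (by decide) ?_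
      intro x h
      rw [cd_uu]
      simp only [one_mul, zero_mul, zero_add, add_zero]
      rw [h10 x h] <;> decide
  · refine ⟨(3 : ZMod 5), ?_, ?_⟩
    · refine lit234 a ha _ (by decide) ?_
      intro x h
      rw [cd_uu]
      simp only [one_mul, zero_mul, zero_add, add_zero]
      rw [h7 x h] <;> decide
    · rw [show ((3 : ZMod 5) + 2) = 0 from by decide]
      refine lit01 a ha _ (by decide) (by decide) (by decide) ?_
      intro x h
      rw [cd_uu]
      simp only [one_mul, zero_mul, zero_add, add_zero]
      rw [h4 x h] <;> decide
  · refine ⟨(3 : ZMod 5), ?_, ?_⟩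
    · refine lit234 a ha _ (by decide) ?_
      intro x h
      rw [cd_uu]
      simp only [one_mul, zero_mul, zero_add, add_zero]
      rw [h7 x h, h12 x h] <;> decide
    · rw [show ((3 : ZMod 5) + 2) = 0 from by decide]
      refine lit01 a ha _ (by decide) (by decide) (by decide) ?_
      intro x h
      rw [cd_uu]
      simp only [one_mul, zero_mul, zero_add, add_zero]
      rw [h4 x h, h9 x h] <;> decide
  · refine ⟨(0 : ZMod 5), ?_, ?_⟩
    · refine lit01 a ha _ (by decide) (by decide) (by decide) ?_
      intro x h
      rw [cd_uu]
      simp only [one_mul, zero_mul, zero_add, add_zero]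
      rw [h1 x h] <;> decide
    · rw [show ((0 : ZMod 5) + 2) = 2 from by decide]
      refine lit234 a ha _ (by decide) ?_
      intro x h
      rw [cd_uu]
      simp only [one_mul, zero_mul, zero_add, add_zero]
      rw [h2 x h] <;> decide
  · refine ⟨(0 : ZMod 5), ?_, ?_⟩
    · refine lit01 a ha _ (by decide) (by decide) (by decide) ?_
      intro x h
      rw [cd_uu]
      simp only [one_mul, zero_mul, zero_add, add_zero]
      rw [h1 x h, h9 x h] <;> decide
    · rw [show ((0 : ZMod 5) + 2) = 2 from by decide]
      refine lit234 a ha _ (by decide) ?_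
      intro x h
      rw [cd_uu]
      simp only [one_mul, zero_mul, zero_add, add_zero]
      rw [h2 x h, h11 x h] <;> decide
  · refine ⟨(1 : ZMod 5), ?_, ?_⟩
    · refine lit01 a ha _ (by decide) (by decide) (by decide) ?_
      intro x h
      rw [cd_uu]
      simp only [one_mul, zero_mul, zero_add, add_zero]
      exact h5 x h
    · rw [show ((1 : ZMod 5) + 2) = 3 from by decide]
      refine lit234 a ha _ (by decide) ?_
      intro x h
      rw [cd_uu]
      simp only [one_mul, zero_mul, zero_add, add_zero]
      rw [h3 x h, h7 x h] <;> decide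
  · refine ⟨(2 : ZMod 5), ?_, ?_⟩
    · refine lit234 a ha _ (by decide) ?_
      intro x h
      rw [cd_uu]
      simp only [one_mul, zero_mul, zero_add, add_zero]
      rw [h2 x h, h6 x h, h11 x h] <;> decide
    · rw [show ((2 : ZMod 5) + 2) = 4 from by decide]
      refine lit234 a ha _ (by decide) ?_
      intro x h
      rw [cd_uu]
      simp only [one_mul, zero_mul, zero_add, add_zero]
      rw [h8 x h, h13 x h] <;> decide

lemma crit_of_mem_F2 (v : M a × M a × M a) (hv : v ∈ F2 a ha) : Crit a ha v := by
  obtain ⟨h1, h2, h3, h4, h5, h6, h7, h8, h9, h10, h11, h12, h13⟩ := hv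
  intro c2 c3 c4 hc
  rcases zmod2_cases c2 with hc2 | hc2 <;> subst hc2 <;>
    rcases zmod2_cases c3 with hc3 | hc3 <;> subst hc3 <;>
      rcases zmod2_cases c4 with hc4 | hc4 <;> subst hc4
  · exact absurd ⟨rfl, rfl, rfl⟩ hc
  · refine ⟨(4 : ZMod 5), ?_, ?_⟩
    · refine lit234 a ha _ (by decide) ?_
      intro x h
      rw [cd_uu]
      simp only [one_mul, zero_mul, zero_add, add_zero]
      rw [h13 x h] <;> decide
    · rw [show ((4 : ZMod 5) + 2) = 1 from by decide]
      refine lit01 a ha _ (by decide) (by decide) (by decide) ?_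
      intro x h
      rw [cd_uu]
      simp only [one_mul, zero_mul, zero_add, add_zero]
      rw [h10 x h] <;> decide
  · refine ⟨(1 : ZMod 5), ?_, ?_⟩
    · refine lit01 a ha _ (by decide) (by decide) (by decide) ?_
      intro x h
      rw [cd_uu]
      simp only [one_mul, zero_mul, zero_add, add_zero]
      rw [h6 x h] <;> decide
    · rw [show ((1 : ZMod 5) + 2) = 3 from by decide]
      refine lit234 a ha _ (by decide) ?_
      intro x h
      rw [cd_uu]
      simp only [one_mul, zero_mul, zero_add, add_zero]
      rw [h7 x h] <;> decide
  · refine ⟨(3 : ZMod 5), ?_, ?_⟩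
    · refine lit234 a ha _ (by decide) ?_
      intro x h
      rw [cd_uu]
      simp only [one_mul, zero_mul, zero_add, add_zero]
      rw [h7 x h, h12 x h] <;> decide
    · rw [show ((3 : ZMod 5) + 2) = 0 from by decide]
      refine lit01 a ha _ (by decide) (by decide) (by decide) ?_
      intro x h
      rw [cd_uu]
      simp only [one_mul, zero_mul, zero_add, add_zero]
      exact h9 x h
  · refine ⟨(0 : ZMod 5), ?_, ?_⟩
    · refine lit01 a ha _ (by decide) (by decide) (by decide) ?_
      intro x h
      rw [cd_uu]
      simp only [one_mul, zero_mul, zero_add, add_zero]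
      rw [h1 x h] <;> decide
    · rw [show ((0 : ZMod 5) + 2) = 2 from by decide]
      refine lit234 a ha _ (by decide) ?_
      intro x h
      rw [cd_uu]
      simp only [one_mul, zero_mul, zero_add, add_zero]
      rw [h3 x h] <;> decide
  · refine ⟨(4 : ZMod 5), ?_, ?_⟩
    · refine lit234 a ha _ (by decide) ?_
      intro x h
      rw [cd_uu]
      simp only [one_mul, zero_mul, zero_add, add_zero]
      rw [h5 x h, h13 x h] <;> decide
    · rw [show ((4 : ZMod 5) + 2) = 1 from by decide]
      refine lit01 a ha _ (by decide) (by decide) (by decide) ?_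
      intro x h
      rw [cd_uu]
      simp only [one_mul, zero_mul, zero_add, add_zero]
      rw [h2 x h, h10 x h] <;> decide
  · refine ⟨(1 : ZMod 5), ?_, ?_⟩
    · refine lit01 a ha _ (by decide) (by decide) (by decide) ?_
      intro x h
      rw [cd_uu]
      simp only [one_mul, zero_mul, zero_add, add_zero]
      rw [h2 x h, h6 x h] <;> decide
    · rw [show ((1 : ZMod 5) + 2) = 3 from by decide]
      refine lit234 a ha _ (by decide) ?_
      intro x h
      rw [cd_uu]
      simp only [one_mul, zero_mul, zero_add, add_zero]
      rw [h4 x h, h7 x h] <;> decide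
  · refine ⟨(2 : ZMod 5), ?_, ?_⟩
    · refine lit234 a ha _ (by decide) ?_
      intro x h
      rw [cd_uu]
      simp only [one_mul, zero_mul, zero_add, add_zero]
      rw [add_assoc, h11 x h, h3 x h] <;> decide
    · rw [show ((2 : ZMod 5) + 2) = 4 from by decide]
      refine lit234 a ha _ (by decide) ?_
      intro x h
      rw [cd_uu]
      simp only [one_mul, zero_mul, zero_add, add_zero]
      rw [h5 x h, h8 x h, h13 x h] <;> decide

lemma crit_of_mem_F3 (v : M a × M a × M a) (hv : v ∈ F3 a ha) : Crit a ha v := by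
  obtain ⟨h1, h2, h3, h4, h5, h6, h7, h8, h9, h10, h11, h12, h13⟩ := hv
  intro c2 c3 c4 hc
  rcases zmod2_cases c2 with hc2 | hc2 <;> subst hc2 <;>
    rcases zmod2_cases c3 with hc3 | hc3 <;> subst hc3 <;>
      rcases zmod2_cases c4 with hc4 | hc4 <;> subst hc4
  · exact absurd ⟨rfl, rfl, rfl⟩ hc
  · refine ⟨(4 : ZMod 5), ?_, ?_⟩
    · refine lit234 a ha _ (by decide) ?_
      intro x h
      rw [cd_uu]
      simp only [one_mul, zero_mul, zero_add, add_zero]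
      rw [h13 x h] <;> decide
    · rw [show ((4 : ZMod 5) + 2) = 1 from by decide]
      refine lit01 a ha _ (by decide) (by decide) (by decide) ?_
      intro x h
      rw [cd_uu]
      simp only [one_mul, zero_mul, zero_add, add_zero]
      rw [h10 x h] <;> decide
  · refine ⟨(1 : ZMod 5), ?_, ?_⟩
    · refine lit01 a ha _ (by decide) (by decide) (by decide) ?_
      intro x h
      rw [cd_uu]
      simp only [one_mul, zero_mul, zero_add, add_zero]
      rw [h5 x h] <;> decide
    · rw [show ((1 : ZMod 5) + 2) = 3 from by decide]
      refine lit234 a ha _ (by decide) ?_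
      intro x h
      rw [cd_uu]
      simp only [one_mul, zero_mul, zero_add, add_zero]
      rw [h7 x h] <;> decide
  · refine ⟨(3 : ZMod 5), ?_, ?_⟩
    · refine lit234 a ha _ (by decide) ?_
      intro x h
      rw [cd_uu]
      simp only [one_mul, zero_mul, zero_add, add_zero]
      rw [h7 x h, h12 x h] <;> decide
    · rw [show ((3 : ZMod 5) + 2) = 0 from by decide]
      refine lit01 a ha _ (by decide) (by decide) (by decide) ?_
      intro x h
      rw [cd_uu]
      simp only [one_mul, zero_mul, zero_add, add_zero]
      rw [h4 x h, h9 x h] <;> decide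
  · refine ⟨(0 : ZMod 5), ?_, ?_⟩
    · refine lit01 a ha _ (by decide) (by decide) (by decide) ?_
      intro x h
      rw [cd_uu]
      simp only [one_mul, zero_mul, zero_add, add_zero]
      rw [h1 x h] <;> decide
    · rw [show ((0 : ZMod 5) + 2) = 2 from by decide]
      refine lit234 a ha _ (by decide) ?_
      intro x h
      rw [cd_uu]
      simp only [one_mul, zero_mul, zero_add, add_zero]
      rw [h2 x h] <;> decide
  · refine ⟨(2 : ZMod 5), ?_, ?_⟩
    · refine lit234 a ha _ (by decide) ?_
      intro x h
      rw [cd_uu]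
      simp only [one_mul, zero_mul, zero_add, add_zero]
      rw [h2 x h, h11 x h] <;> decide
    · rw [show ((2 : ZMod 5) + 2) = 4 from by decide]
      refine lit234 a ha _ (by decide) ?_
      intro x h
      rw [cd_uu]
      simp only [one_mul, zero_mul, zero_add, add_zero]
      rw [h3 x h, h13 x h] <;> decide
  · refine ⟨(0 : ZMod 5), ?_, ?_⟩
    · refine lit01 a ha _ (by decide) (by decide) (by decide) ?_
      intro x h
      rw [cd_uu]
      simp only [one_mul, zero_mul, zero_add, add_zero]
      rw [h1 x h, h4 x h] <;> decide
    · rw [show ((0 : ZMod 5) + 2) = 2 from by decide]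
      refine lit234 a ha _ (by decide) ?_
      intro x h
      rw [cd_uu]
      simp only [one_mul, zero_mul, zero_add, add_zero]
      rw [h2 x h, h6 x h] <;> decide
  · refine ⟨(2 : ZMod 5), ?_, ?_⟩
    · refine lit234 a ha _ (by decide) ?_
      intro x h
      rw [cd_uu]
      simp only [one_mul, zero_mul, zero_add, add_zero]
      rw [h2 x h, h6 x h, h11 x h] <;> decide
    · rw [show ((2 : ZMod 5) + 2) = 4 from by decide]
      refine lit234 a ha _ (by decide) ?_
      intro x h
      rw [cd_uu]
      simp only [one_mul, zero_mul, zero_add, add_zero]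
      rw [h3 x h, h8 x h, h13 x h] <;> decide

lemma crit_of_mem_F4 (v : M a × M a × M a) (hv : v ∈ F4 a ha) : Crit a ha v := by
  obtain ⟨h1, h2, h3, h4, h5, h6, h7, h8, h9, h10, h11, h12⟩ := hv
  intro c2 c3 c4 hc
  rcases zmod2_cases c2 with hc2 | hc2 <;> subst hc2 <;>
    rcases zmod2_cases c3 with hc3 | hc3 <;> subst hc3 <;>
      rcases zmod2_cases c4 with hc4 | hc4 <;> subst hc4
  · exact absurd ⟨rfl, rfl, rfl⟩ hc
  · refine ⟨(4 : ZMod 5), ?_, ?_⟩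
    · refine lit234 a ha _ (by decide) ?_
      intro x h
      rw [cd_uu]
      simp only [one_mul, zero_mul, zero_add, add_zero]
      rw [h12 x h] <;> decide
    · rw [show ((4 : ZMod 5) + 2) = 1 from by decide]
      refine lit01 a ha _ (by decide) (by decide) (by decide) ?_
      intro x h
      rw [cd_uu]
      simp only [one_mul, zero_mul, zero_add, add_zero]
      rw [h9 x h] <;> decide
  · rcases h6 with ⟨hr, hs⟩ | ⟨hr, hs⟩
    · refine ⟨(1 : ZMod 5), ?_, ?_⟩
      · refine lit01 a ha _ (by decide) (by decide) (by decide) ?_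
        intro x h
        rw [cd_uu]
        simp only [one_mul, zero_mul, zero_add, add_zero]
        rw [hs x h] <;> decide
      · rw [show ((1 : ZMod 5) + 2) = 3 from by decide]
        refine lit234 a ha _ (by decide) ?_
        intro x h
        rw [cd_uu]
        simp only [one_mul, zero_mul, zero_add, add_zero]
        rw [h7 x h] <;> decide
    · refine ⟨(3 : ZMod 5), ?_, ?_⟩
      · refine lit234 a ha _ (by decide) ?_
        intro x h
        rw [cd_uu]
        simp only [one_mul, zero_mul, zero_add, add_zero]
        rw [h7 x h] <;> decide
      · rw [show ((3 : ZMod 5) + 2) = 0 from by decide]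
        refine lit01 a ha _ (by decide) (by decide) (by decide) ?_
        intro x h
        rw [cd_uu]
        simp only [one_mul, zero_mul, zero_add, add_zero]
        rw [hr x h] <;> decide
  · rcases h6 with ⟨hr, hs⟩ | ⟨hr, hs⟩
    · refine ⟨(3 : ZMod 5), ?_, ?_⟩
      · refine lit234 a ha _ (by decide) ?_
        intro x h
        rw [cd_uu]
        simp only [one_mul, zero_mul, zero_add, add_zero]
        rw [h7 x h, h11 x h] <;> decide
      · rw [show ((3 : ZMod 5) + 2) = 0 from by decide]
        refine lit01 a ha _ (by decide) (by decide) (by decide) ?_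
        intro x h
        rw [cd_uu]
        simp only [one_mul, zero_mul, zero_add, add_zero]
        rw [hr x h, h8 x h] <;> decide
    · refine ⟨(1 : ZMod 5), ?_, ?_⟩
      · refine lit01 a ha _ (by decide) (by decide) (by decide) ?_
        intro x h
        rw [cd_uu]
        simp only [one_mul, zero_mul, zero_add, add_zero]
        rw [hs x h, h9 x h] <;> decide
      · rw [show ((1 : ZMod 5) + 2) = 3 from by decide]
        refine lit234 a ha _ (by decide) ?_
        intro x h
        rw [cd_uu]
        simp only [one_mul, zero_mul, zero_add, add_zero]
        rw [h7 x h, h11 x h] <;> decide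
  · refine ⟨(0 : ZMod 5), ?_, ?_⟩
    · refine lit01 a ha _ (by decide) (by decide) (by decide) ?_
      intro x h
      rw [cd_uu]
      simp only [one_mul, zero_mul, zero_add, add_zero]
      rw [h1 x h] <;> decide
    · rw [show ((0 : ZMod 5) + 2) = 2 from by decide]
      refine lit234 a ha _ (by decide) ?_
      intro x h
      rw [cd_uu]
      simp only [one_mul, zero_mul, zero_add, add_zero]
      rw [h3 x h] <;> decide
  · refine ⟨(2 : ZMod 5), ?_, ?_⟩
    · refine lit234 a ha _ (by decide) ?_
      intro x h
      rw [cd_uu]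
      simp only [one_mul, zero_mul, zero_add, add_zero]
      rw [h3 x h, h10 x h] <;> decide
    · rw [show ((2 : ZMod 5) + 2) = 4 from by decide]
      refine lit234 a ha _ (by decide) ?_
      intro x h
      rw [cd_uu]
      simp only [one_mul, zero_mul, zero_add, add_zero]
      rw [h5 x h, h12 x h] <;> decide
  · rcases h6 with ⟨hr, hs⟩ | ⟨hr, hs⟩
    · refine ⟨(3 : ZMod 5), ?_, ?_⟩
      · refine lit234 a ha _ (by decide) ?_
        intro x h
        rw [cd_uu]
        simp only [one_mul, zero_mul, zero_add, add_zero]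
        rw [h4 x h, h7 x h] <;> decide
      · rw [show ((3 : ZMod 5) + 2) = 0 from by decide]
        refine lit01 a ha _ (by decide) (by decide) (by decide) ?_
        intro x h
        rw [cd_uu]
        simp only [one_mul, zero_mul, zero_add, add_zero]
        rw [h1 x h, hr x h] <;> decide
    · refine ⟨(1 : ZMod 5), ?_, ?_⟩
      · refine lit01 a ha _ (by decide) (by decide) (by decide) ?_
        intro x h
        rw [cd_uu]
        simp only [one_mul, zero_mul, zero_add, add_zero]
        rw [h2 x h, hs x h] <;> decide
      · rw [show ((1 : ZMod 5) + 2) = 3 from by decide]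
        refine lit234 a ha _ (by decide) ?_
        intro x h
        rw [cd_uu]
        simp only [one_mul, zero_mul, zero_add, add_zero]
        rw [h4 x h, h7 x h] <;> decide
  · rcases h6 with ⟨hr, hs⟩ | ⟨hr, hs⟩
    · refine ⟨(1 : ZMod 5), ?_, ?_⟩
      · refine lit01 a ha _ (by decide) (by decide) (by decide) ?_
        intro x h
        rw [cd_uu]
        simp only [one_mul, zero_mul, zero_add, add_zero]
        rw [h2 x h, hs x h, h9 x h] <;> decide
      · rw [show ((1 : ZMod 5) + 2) = 3 from by decide]
        refine lit234 a ha _ (by decide) ?_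
        intro x h
        rw [cd_uu]
        simp only [one_mul, zero_mul, zero_add, add_zero]
        rw [h4 x h, h7 x h, h11 x h] <;> decide
    · refine ⟨(3 : ZMod 5), ?_, ?_⟩
      · refine lit234 a ha _ (by decide) ?_
        intro x h
        rw [cd_uu]
        simp only [one_mul, zero_mul, zero_add, add_zero]
        rw [h4 x h, h7 x h, h11 x h] <;> decide
      · rw [show ((3 : ZMod 5) + 2) = 0 from by decide]
        refine lit01 a ha _ (by decide) (by decide) (by decide) ?_
        intro x h
        rw [cd_uu]
        simp only [one_mul, zero_mul, zero_add, add_zero]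
        rw [h1 x h, hr x h, h8 x h] <;> decide

section Derivations
variable {b : ZMod 5} {u u' u'' : M a}

lemma derS1 (hS : BkS a ha b u u') (h : Bk a ha b u 1) : Bk a ha b u' 0 := fun x hx => by
  have e := hS x hx; rw [h x hx] at e
  exact (by decide : ∀ t : ZMod 2, 1 + t = 1 → t = 0) _ e

lemma derS0 (hS : BkS a ha b u u') (h : Bk a ha b u 0) : Bk a ha b u' 1 := fun x hx => by
  have e := hS x hx; rw [h x hx] at e
  exact (by decide : ∀ t : ZMod 2, 0 + t = 1 → t = 1) _ e

lemma derS1' (hS : BkS a ha b u u') (h : Bk a ha b u' 1) : Bk a ha b u 0 := fun x hx => by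
  have e := hS x hx; rw [h x hx] at e
  exact (by decide : ∀ t : ZMod 2, t + 1 = 1 → t = 0) _ e

lemma derS0' (hS : BkS a ha b u u') (h : Bk a ha b u' 0) : Bk a ha b u 1 := fun x hx => by
  have e := hS x hx; rw [h x hx] at e
  exact (by decide : ∀ t : ZMod 2, t + 0 = 1 → t = 1) _ e

lemma derZ1 (hZ : BkZ a ha b u u') (h : Bk a ha b u 1) : Bk a ha b u' 1 := fun x hx => by
  have e := hZ x hx; rw [h x hx] at e
  exact (by decide : ∀ t : ZMod 2, 1 + t = 0 → t = 1) _ e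

lemma derZ0 (hZ : BkZ a ha b u u') (h : Bk a ha b u 0) : Bk a ha b u' 0 := fun x hx => by
  have e := hZ x hx; rw [h x hx] at e
  exact (by decide : ∀ t : ZMod 2, 0 + t = 0 → t = 0) _ e

lemma derZ1' (hZ : BkZ a ha b u u') (h : Bk a ha b u' 1) : Bk a ha b u 1 := fun x hx => by
  have e := hZ x hx; rw [h x hx] at e
  exact (by decide : ∀ t : ZMod 2, t + 1 = 0 → t = 1) _ e

lemma derZ0' (hZ : BkZ a ha b u u') (h : Bk a ha b u' 0) : Bk a ha b u 0 := fun x hx => by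
  have e := hZ x hx; rw [h x hx] at e
  exact (by decide : ∀ t : ZMod 2, t + 0 = 0 → t = 0) _ e

lemma derT (hT : BkT a ha b u u' u'') (h : Bk a ha b u 1) : BkZ a ha b u' u'' := fun x hx => by
  have e := hT x hx; rw [h x hx] at e
  exact (by decide : ∀ s t : ZMod 2, 1 + s + t = 1 → s + t = 0) _ _ e

lemma derT0 (hT : BkT a ha b u u' u'') (h : Bk a ha b u 0) : BkS a ha b u' u'' := fun x hx => by
  have e := hT x hx; rw [h x hx] at e
  exact (by decide : ∀ s t : ZMod 2, 0 + s + t = 1 → s + t = 1) _ _ e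

lemma derTm1 (hT : BkT a ha b u u' u'') (h : Bk a ha b u' 1) : BkZ a ha b u u'' := fun x hx => by
  have e := hT x hx; rw [h x hx] at e
  exact (by decide : ∀ s t : ZMod 2, s + 1 + t = 1 → s + t = 0) _ _ e

lemma derT3 (hT : BkT a ha b u u' u'') (h : Bk a ha b u'' 1) : BkZ a ha b u u' := fun x hx => by
  have e := hT x hx; rw [h x hx] at e
  exact (by decide : ∀ s t : ZMod 2, s + t + 1 = 1 → s + t = 0) _ _ e

end Derivations

lemma nb0 {u : M a} (h1 : Bk a ha 0 u 1) (h0 : Bk a ha 0 u 0) : False := by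
  have hm : (⟨0, ⟨0, ha 0⟩⟩ : W a) ∈ fac a ha :=
    mem_fac_of_fst a ha 0 (by decide) (by decide) (by decide) ⟨0, ha 0⟩
  exact (by decide : (1 : ZMod 2) ≠ 0) ((h1 ⟨0, ha 0⟩ hm).symm.trans (h0 ⟨0, ha 0⟩ hm))

lemma nb1 {u : M a} (h1 : Bk a ha 1 u 1) (h0 : Bk a ha 1 u 0) : False := by
  have hm : (⟨1, ⟨0, ha 1⟩⟩ : W a) ∈ fac a ha :=
    mem_fac_of_fst a ha 1 (by decide) (by decide) (by decide) ⟨0, ha 1⟩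
  exact (by decide : (1 : ZMod 2) ≠ 0) ((h1 ⟨0, ha 1⟩ hm).symm.trans (h0 ⟨0, ha 1⟩ hm))

lemma nbSZ0 {u u' : M a} (hS : BkS a ha 0 u u') (hZ : BkZ a ha 0 u u') : False := by
  have hm : (⟨0, ⟨0, ha 0⟩⟩ : W a) ∈ fac a ha :=
    mem_fac_of_fst a ha 0 (by decide) (by decide) (by decide) ⟨0, ha 0⟩
  exact (by decide : (1 : ZMod 2) ≠ 0) ((hS ⟨0, ha 0⟩ hm).symm.trans (hZ ⟨0, ha 0⟩ hm))

lemma nbSZ1 {u u' : M a} (hS : BkS a ha 1 u u') (hZ : BkZ a ha 1 u u') : False := by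
  have hm : (⟨1, ⟨0, ha 1⟩⟩ : W a) ∈ fac a ha :=
    mem_fac_of_fst a ha 1 (by decide) (by decide) (by decide) ⟨0, ha 1⟩
  exact (by decide : (1 : ZMod 2) ≠ 0) ((hS ⟨0, ha 1⟩ hm).symm.trans (hZ ⟨0, ha 1⟩ hm))

lemma mem_of_crit (v : M a × M a × M a) (hcrit : Crit a ha v) :
    v ∈ F0 a ha ∨ v ∈ F1 a ha ∨ v ∈ F2 a ha ∨ v ∈ F3 a ha ∨ v ∈ F4 a ha := by
  obtain ⟨A1, B1⟩ := cond100 a ha v hcrit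
  obtain ⟨C1, hC3or⟩ := cond010 a ha v hcrit
  obtain ⟨D1, E1⟩ := cond001 a ha v hcrit
  have h23 := cond110 a ha v hcrit
  have h34 := cond011 a ha v hcrit
  have h24 := cond101 a ha v hcrit
  have h234 := cond111 a ha v hcrit
  by_cases hr1 : Bk a ha 0 v.2.1 1
  · have hC23' : BkS a ha 1 v.1 v.2.1 ∧ Bk a ha 3 v.1 0 := by
      rcases h23 with ⟨hS0, _⟩ | ⟨hS1, hS3⟩ | ⟨hS0, _⟩
      · exact (nb0 a ha hr1 (derS1 a ha hS0 A1)).elim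
      · exact ⟨hS1, derS1' a ha hS3 C1⟩
      · exact (nb0 a ha hr1 (derS1 a ha hS0 A1)).elim
    obtain ⟨sRel, p0⟩ := hC23'
    by_cases hs1 : Bk a ha 1 v.2.1 1
    · -- r = 1, s = 1
      have hC34' : Bk a ha 0 v.2.2 0 ∧ Bk a ha 3 v.2.2 0 ∧ BkS a ha 0 v.2.1 v.2.2 := by
        rcases h34 with ⟨hS1', _⟩ | ⟨hS0', hS3'⟩ | ⟨hS1', _⟩
        · exact (nb1 a ha D1 (derS1 a ha hS1' hs1)).elim
        · exact ⟨derS1 a ha hS0' hr1, derS1 a ha hS3' C1, hS0'⟩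
        · exact (nb1 a ha D1 (derS1 a ha hS1' hs1)).elim
      obtain ⟨y0, m0, hRel0⟩ := hC34'
      have hC234' : BkZ a ha 2 v.2.1 v.2.2 ∧ BkZ a ha 4 v.1 v.2.1 := by
        rcases h234 with ⟨hT0, _⟩ | ⟨hT1, _⟩ | ⟨hT2, hT4⟩ | ⟨hT0, _⟩ | ⟨hT1, _⟩
        · exact (nb0 a ha (derZ1 a ha (derT a ha hT0 A1) hr1) y0).elim
        · exact (nb1 a ha hs1 (derS1 a ha sRel (derZ1' a ha (derTm1 a ha hT1 hs1) D1))).elim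
        · exact ⟨derT a ha hT2 B1, derT3 a ha hT4 E1⟩
        · exact (nb0 a ha (derZ1 a ha (derT a ha hT0 A1) hr1) y0).elim
        · exact (nb1 a ha hs1 (derS1 a ha sRel (derZ1' a ha (derTm1 a ha hT1 hs1) D1))).elim
      obtain ⟨zt, wq⟩ := hC234'
      rcases h24 with ⟨hS0'', hS2''⟩ | ⟨hS2'', hS4''⟩ | ⟨hS1'', hS4''⟩
      · have z0 := derS1 a ha hS2'' B1
        have t0 := derZ0' a ha zt z0
        exact Or.inr (Or.inl ⟨A1, B1, p0, hr1, sRel, t0, C1, wq, y0, D1, z0, m0, E1⟩)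
      · have z0 := derS1 a ha hS2'' B1
        have t0 := derZ0' a ha zt z0
        exact Or.inr (Or.inl ⟨A1, B1, p0, hr1, sRel, t0, C1, wq, y0, D1, z0, m0, E1⟩)
      · have x0 := derS1' a ha hS1'' D1
        have q0 := derS1' a ha hS4'' E1
        have w0 := derZ0 a ha wq q0
        exact Or.inr (Or.inr (Or.inl ⟨A1, x0, B1, p0, q0, hs1, C1, w0, hRel0, D1, zt, m0, E1⟩))
    · -- r = 1, s ≠ 1
      rcases h34 with ⟨hS1', hS3'⟩ | ⟨hS0', hS3'⟩ | ⟨hS1', hS4'⟩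
      · -- C34 case 1: s = 0, m = 0
        have s0 := derS1' a ha hS1' D1
        have m0 := derS1 a ha hS3' C1
        have x1 := derS0' a ha sRel s0
        rcases h24 with ⟨hS0'', hS2''⟩ | ⟨hS2'', hS4''⟩ | ⟨hS1'', hS4''⟩
        · have y0 := derS1 a ha hS0'' A1
          have z0 := derS1 a ha hS2'' B1
          rcases h234 with ⟨hT0, hT2⟩ | ⟨hT1, _⟩ | ⟨hT2, hT4⟩ | ⟨hT0, hT3⟩ | ⟨hT1, _⟩
          · exact (nb0 a ha (derZ1 a ha (derT a ha hT0 A1) hr1) y0).elim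
          · exact (nb1 a ha (derZ1' a ha (derT a ha hT1 x1) D1) s0).elim
          · have zt := derT a ha hT2 B1
            have t0 := derZ0' a ha zt z0
            have wq := derT3 a ha hT4 E1
            exact Or.inr (Or.inl ⟨A1, B1, p0, hr1, sRel, t0, C1, wq, y0, D1, z0, m0, E1⟩)
          · exact (nb0 a ha (derZ1 a ha (derT a ha hT0 A1) hr1) y0).elim
          · exact (nb1 a ha (derZ1' a ha (derT a ha hT1 x1) D1) s0).elim
        · have z0 := derS1 a ha hS2'' B1
          have q0 := derS1' a ha hS4'' E1
          rcases h234 with ⟨hT0, hT2⟩ | ⟨hT1, _⟩ | ⟨hT2, hT4⟩ | ⟨hT0, hT3⟩ | ⟨hT1, _⟩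
          · have y1 := derZ1 a ha (derT a ha hT0 A1) hr1
            exact Or.inr (Or.inr (Or.inr (Or.inr
              ⟨A1, x1, B1, p0, q0, Or.inr ⟨hr1, s0⟩, C1, y1, D1, z0, m0, E1⟩)))
          · exact (nb1 a ha (derZ1' a ha (derT a ha hT1 x1) D1) s0).elim
          · have zt := derT a ha hT2 B1
            have t0 := derZ0' a ha zt z0
            have wq := derT3 a ha hT4 E1
            have w0 := derZ0 a ha wq q0
            exact Or.inl ⟨A1, x1, B1, p0, q0, hr1, s0, t0, C1, w0, D1, z0, E1⟩
          · have y1 := derZ1 a ha (derT a ha hT0 A1) hr1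
            exact Or.inr (Or.inr (Or.inr (Or.inr
              ⟨A1, x1, B1, p0, q0, Or.inr ⟨hr1, s0⟩, C1, y1, D1, z0, m0, E1⟩)))
          · exact (nb1 a ha (derZ1' a ha (derT a ha hT1 x1) D1) s0).elim
        · exact (nb1 a ha x1 (derS1' a ha hS1'' D1)).elim
      · -- C34 case 2: m = 0, y = 0
        have m0 := derS1 a ha hS3' C1
        have y0 := derS1 a ha hS0' hr1
        rcases h24 with ⟨hS0'', hS2''⟩ | ⟨hS2'', hS4''⟩ | ⟨hS1'', hS4''⟩
        · have z0 := derS1 a ha hS2'' B1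
          rcases h234 with ⟨hT0, hT2⟩ | ⟨hT1, _⟩ | ⟨hT2, hT4⟩ | ⟨hT0, hT3⟩ | ⟨hT1, _⟩
          · exact (nb0 a ha (derZ1 a ha (derT a ha hT0 A1) hr1) y0).elim
          · exact (nbSZ1 a ha sRel (derT3 a ha hT1 D1)).elim
          · have zt := derT a ha hT2 B1
            have t0 := derZ0' a ha zt z0
            have wq := derT3 a ha hT4 E1
            exact Or.inr (Or.inl ⟨A1, B1, p0, hr1, sRel, t0, C1, wq, y0, D1, z0, m0, E1⟩)
          · exact (nb0 a ha (derZ1 a ha (derT a ha hT0 A1) hr1) y0).elim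
          · exact (nbSZ1 a ha sRel (derT3 a ha hT1 D1)).elim
        · have z0 := derS1 a ha hS2'' B1
          rcases h234 with ⟨hT0, hT2⟩ | ⟨hT1, _⟩ | ⟨hT2, hT4⟩ | ⟨hT0, hT3⟩ | ⟨hT1, _⟩
          · exact (nb0 a ha (derZ1 a ha (derT a ha hT0 A1) hr1) y0).elim
          · exact (nbSZ1 a ha sRel (derT3 a ha hT1 D1)).elim
          · have zt := derT a ha hT2 B1
            have t0 := derZ0' a ha zt z0
            have wq := derT3 a ha hT4 E1
            exact Or.inr (Or.inl ⟨A1, B1, p0, hr1, sRel, t0, C1, wq, y0, D1, z0, m0, E1⟩)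
          · exact (nb0 a ha (derZ1 a ha (derT a ha hT0 A1) hr1) y0).elim
          · exact (nbSZ1 a ha sRel (derT3 a ha hT1 D1)).elim
        · exact absurd (derS0 a ha sRel (derS1' a ha hS1'' D1)) hs1
      · -- C34 case 3: s = 0, w = 0
        have s0 := derS1' a ha hS1' D1
        have w0 := derS1' a ha hS4' E1
        have x1 := derS0' a ha sRel s0
        rcases h24 with ⟨hS0'', hS2''⟩ | ⟨hS2'', hS4''⟩ | ⟨hS1'', hS4''⟩
        · have y0 := derS1 a ha hS0'' A1
          have z0 := derS1 a ha hS2'' B1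
          rcases h234 with ⟨hT0, hT2⟩ | ⟨hT1, _⟩ | ⟨hT2, hT4⟩ | ⟨hT0, hT3⟩ | ⟨hT1, _⟩
          · exact (nb0 a ha (derZ1 a ha (derT a ha hT0 A1) hr1) y0).elim
          · exact (nb1 a ha (derZ1' a ha (derT a ha hT1 x1) D1) s0).elim
          · have zt := derT a ha hT2 B1
            have t0 := derZ0' a ha zt z0
            have wq := derT3 a ha hT4 E1
            have q0 := derZ0' a ha wq w0
            exact Or.inl ⟨A1, x1, B1, p0, q0, hr1, s0, t0, C1, w0, D1, z0, E1⟩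
          · exact (nb0 a ha (derZ1 a ha (derT a ha hT0 A1) hr1) y0).elim
          · exact (nb1 a ha (derZ1' a ha (derT a ha hT1 x1) D1) s0).elim
        · have z0 := derS1 a ha hS2'' B1
          have q0 := derS1' a ha hS4'' E1
          rcases h234 with ⟨hT0, hT2⟩ | ⟨hT1, _⟩ | ⟨hT2, hT4⟩ | ⟨hT0, hT3⟩ | ⟨hT1, _⟩
          · have y1 := derZ1 a ha (derT a ha hT0 A1) hr1
            have zt := derT a ha hT2 B1
            have t0 := derZ0' a ha zt z0
            exact Or.inl ⟨A1, x1, B1, p0, q0, hr1, s0, t0, C1, w0, D1, z0, E1⟩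
          · exact (nb1 a ha (derZ1' a ha (derT a ha hT1 x1) D1) s0).elim
          · have zt := derT a ha hT2 B1
            have t0 := derZ0' a ha zt z0
            exact Or.inl ⟨A1, x1, B1, p0, q0, hr1, s0, t0, C1, w0, D1, z0, E1⟩
          · have y1 := derZ1 a ha (derT a ha hT0 A1) hr1
            have m0 := derS1 a ha (derT0 a ha hT3 p0) C1
            exact Or.inr (Or.inr (Or.inr (Or.inr
              ⟨A1, x1, B1, p0, q0, Or.inr ⟨hr1, s0⟩, C1, y1, D1, z0, m0, E1⟩)))
          · exact (nb1 a ha (derZ1' a ha (derT a ha hT1 x1) D1) s0).elim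
        · exact (nb1 a ha x1 (derS1' a ha hS1'' D1)).elim
  · -- r ≠ 1, so s = 1
    have hs1 : Bk a ha 1 v.2.1 1 := by
      rcases hC3or with h | h
      · exact absurd h hr1
      · exact h
    have hC34' : BkS a ha 0 v.2.1 v.2.2 ∧ Bk a ha 3 v.2.2 0 := by
      rcases h34 with ⟨hS1', _⟩ | ⟨hS0', hS3'⟩ | ⟨hS1', _⟩
      · exact (nb1 a ha D1 (derS1 a ha hS1' hs1)).elim
      · exact ⟨hS0', derS1 a ha hS3' C1⟩
      · exact (nb1 a ha D1 (derS1 a ha hS1' hs1)).elim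
    obtain ⟨Rel0, m0⟩ := hC34'
    rcases h234 with ⟨hT0, _⟩ | ⟨hT1, hT3⟩ | ⟨hT2, hT4⟩ | ⟨hT0, _⟩ | ⟨hT1, hT4⟩
    · exact (nbSZ0 a ha Rel0 (derT a ha hT0 A1)).elim
    · -- T1 ∧ T3
      have x1 := derZ1' a ha (derTm1 a ha hT1 hs1) D1
      have p0 := derZ0' a ha (derTm1 a ha hT3 C1) m0
      have hr0 : Bk a ha 0 v.2.1 0 := by
        rcases h23 with ⟨hS0, _⟩ | ⟨hS1, _⟩ | ⟨hS0, _⟩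
        · exact derS1 a ha hS0 A1
        · exact (nb1 a ha hs1 (derS1 a ha hS1 x1)).elim
        · exact derS1 a ha hS0 A1
      have y1 := derS0 a ha Rel0 hr0
      have hzq : Bk a ha 2 v.2.2 0 ∧ Bk a ha 4 v.1 0 := by
        rcases h24 with ⟨hS0'', _⟩ | ⟨hS2'', hS4''⟩ | ⟨hS1'', _⟩
        · exact (nb0 a ha y1 (derS1 a ha hS0'' A1)).elim
        · exact ⟨derS1 a ha hS2'' B1, derS1' a ha hS4'' E1⟩
        · exact (nb1 a ha x1 (derS1' a ha hS1'' D1)).elim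
      obtain ⟨z0, q0⟩ := hzq
      exact Or.inr (Or.inr (Or.inr (Or.inr
        ⟨A1, x1, B1, p0, q0, Or.inl ⟨hr0, hs1⟩, C1, y1, D1, z0, m0, E1⟩)))
    · -- T2 ∧ T4
      have zt := derT a ha hT2 B1
      have wq := derT3 a ha hT4 E1
      rcases h23 with ⟨hS0, hS2⟩ | ⟨hS1, hS3⟩ | ⟨hS0, hS3⟩
      · have r0 := derS1 a ha hS0 A1
        have t0 := derS1 a ha hS2 B1
        have y1 := derS0 a ha Rel0 r0
        have z0 := derZ0 a ha zt t0
        rcases h24 with ⟨hS0'', _⟩ | ⟨hS2'', hS4''⟩ | ⟨hS1'', hS4''⟩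
        · exact (nb0 a ha y1 (derS1 a ha hS0'' A1)).elim
        · have q0 := derS1' a ha hS4'' E1
          have w0 := derZ0 a ha wq q0
          exact Or.inr (Or.inr (Or.inr (Or.inl
            ⟨A1, B1, q0, r0, hs1, t0, C1, w0, y1, D1, z0, m0, E1⟩)))
        · have q0 := derS1' a ha hS4'' E1
          have w0 := derZ0 a ha wq q0
          exact Or.inr (Or.inr (Or.inr (Or.inl
            ⟨A1, B1, q0, r0, hs1, t0, C1, w0, y1, D1, z0, m0, E1⟩)))
      · have x0 := derS1' a ha hS1 hs1
        have p0 := derS1' a ha hS3 C1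
        rcases h24 with ⟨hS0'', _⟩ | ⟨hS2'', hS4''⟩ | ⟨hS1'', hS4''⟩
        · exact absurd (derS0' a ha Rel0 (derS1 a ha hS0'' A1)) hr1
        · have q0 := derS1' a ha hS4'' E1
          have w0 := derZ0 a ha wq q0
          exact Or.inr (Or.inr (Or.inl
            ⟨A1, x0, B1, p0, q0, hs1, C1, w0, Rel0, D1, zt, m0, E1⟩))
        · have q0 := derS1' a ha hS4'' E1
          have w0 := derZ0 a ha wq q0
          exact Or.inr (Or.inr (Or.inl
            ⟨A1, x0, B1, p0, q0, hs1, C1, w0, Rel0, D1, zt, m0, E1⟩))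
      · have r0 := derS1 a ha hS0 A1
        have p0 := derS1' a ha hS3 C1
        have y1 := derS0 a ha Rel0 r0
        rcases h24 with ⟨hS0'', _⟩ | ⟨hS2'', hS4''⟩ | ⟨hS1'', hS4''⟩
        · exact (nb0 a ha y1 (derS1 a ha hS0'' A1)).elim
        · have z0 := derS1 a ha hS2'' B1
          have t0 := derZ0' a ha zt z0
          have q0 := derS1' a ha hS4'' E1
          have w0 := derZ0 a ha wq q0
          exact Or.inr (Or.inr (Or.inr (Or.inl
            ⟨A1, B1, q0, r0, hs1, t0, C1, w0, y1, D1, z0, m0, E1⟩)))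
        · have x0 := derS1' a ha hS1'' D1
          have q0 := derS1' a ha hS4'' E1
          have w0 := derZ0 a ha wq q0
          exact Or.inr (Or.inr (Or.inl
            ⟨A1, x0, B1, p0, q0, hs1, C1, w0, Rel0, D1, zt, m0, E1⟩))
    · exact (nbSZ0 a ha Rel0 (derT a ha hT0 A1)).elim
    · -- T1 ∧ T4
      have x1 := derZ1' a ha (derTm1 a ha hT1 hs1) D1
      have wq := derT3 a ha hT4 E1
      rcases h23 with ⟨hS0, hS2⟩ | ⟨hS1, _⟩ | ⟨hS0, hS3⟩
      · have r0 := derS1 a ha hS0 A1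
        have t0 := derS1 a ha hS2 B1
        have y1 := derS0 a ha Rel0 r0
        rcases h24 with ⟨hS0'', _⟩ | ⟨hS2'', hS4''⟩ | ⟨hS1'', _⟩
        · exact (nb0 a ha y1 (derS1 a ha hS0'' A1)).elim
        · have z0 := derS1 a ha hS2'' B1
          have q0 := derS1' a ha hS4'' E1
          have w0 := derZ0 a ha wq q0
          exact Or.inr (Or.inr (Or.inr (Or.inl
            ⟨A1, B1, q0, r0, hs1, t0, C1, w0, y1, D1, z0, m0, E1⟩)))
        · exact (nb1 a ha x1 (derS1' a ha hS1'' D1)).elim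
      · exact (nb1 a ha hs1 (derS1 a ha hS1 x1)).elim
      · have r0 := derS1 a ha hS0 A1
        have p0 := derS1' a ha hS3 C1
        have y1 := derS0 a ha Rel0 r0
        rcases h24 with ⟨hS0'', _⟩ | ⟨hS2'', hS4''⟩ | ⟨hS1'', _⟩
        · exact (nb0 a ha y1 (derS1 a ha hS0'' A1)).elim
        · have z0 := derS1 a ha hS2'' B1
          have q0 := derS1' a ha hS4'' E1
          exact Or.inr (Or.inr (Or.inr (Or.inr
            ⟨A1, x1, B1, p0, q0, Or.inl ⟨r0, hs1⟩, C1, y1, D1, z0, m0, E1⟩)))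
        · exact (nb1 a ha x1 (derS1' a ha hS1'' D1)).elim

/-- block subtype -/
abbrev blkT (b : ZMod 5) := {x : Fin (a b) // (⟨b, x⟩ : W a) ∈ fac a ha}

noncomputable def mkv (f : ∀ i : ZMod 5, blkT a ha i → ZMod 2) : M a :=
  fun k => f (((ee a ha).symm k : W a)).1
    ⟨(((ee a ha).symm k : W a)).2, ((ee a ha).symm k).2⟩

lemma cd_mkv (f : ∀ i : ZMod 5, blkT a ha i → ZMod 2) (i : ZMod 5) (x : Fin (a i))
    (h : (⟨i, x⟩ : W a) ∈ fac a ha) :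
    cd a ha (mkv a ha f) ⟨i, x⟩ h = f i ⟨x, h⟩ := by
  have hsy : (ee a ha).symm (ee a ha ⟨⟨i, x⟩, h⟩) = ⟨⟨i, x⟩, h⟩ :=
    (ee a ha).symm_apply_apply _
  exact congrArg
    (fun ws : {w : W a // w ∈ fac a ha} => f (ws : W a).1 ⟨(ws : W a).2, ws.2⟩) hsy

noncomputable def pick (g0 : blkT a ha 0 → ZMod 2) (g1 : blkT a ha 1 → ZMod 2)
    (g2 : blkT a ha 2 → ZMod 2) (g3 : blkT a ha 3 → ZMod 2) (g4 : blkT a ha 4 → ZMod 2) :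
    M a :=
  mkv a ha (fun i =>
    if h : i = 0 then fun x => g0 (h ▸ x) else
    if h : i = 1 then fun x => g1 (h ▸ x) else
    if h : i = 2 then fun x => g2 (h ▸ x) else
    if h : i = 3 then fun x => g3 (h ▸ x) else
    if h : i = 4 then fun x => g4 (h ▸ x) else fun _ => 0)

lemma cd_pick0 (g0 g1 g2 g3 g4) (x : Fin (a 0)) (h : (⟨0, x⟩ : W a) ∈ fac a ha) :
    cd a ha (pick a ha g0 g1 g2 g3 g4) ⟨0, x⟩ h = g0 ⟨x, h⟩ := by
  rw [pick, cd_mkv, dif_pos rfl]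

lemma cd_pick1 (g0 g1 g2 g3 g4) (x : Fin (a 1)) (h : (⟨1, x⟩ : W a) ∈ fac a ha) :
    cd a ha (pick a ha g0 g1 g2 g3 g4) ⟨1, x⟩ h = g1 ⟨x, h⟩ := by
  rw [pick, cd_mkv, dif_neg (by decide), dif_pos rfl]

lemma cd_pick2 (g0 g1 g2 g3 g4) (x : Fin (a 2)) (h : (⟨2, x⟩ : W a) ∈ fac a ha) :
    cd a ha (pick a ha g0 g1 g2 g3 g4) ⟨2, x⟩ h = g2 ⟨x, h⟩ := by
  rw [pick, cd_mkv, dif_neg (by decide), dif_neg (by decide), dif_pos rfl]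

lemma cd_pick3 (g0 g1 g2 g3 g4) (x : Fin (a 3)) (h : (⟨3, x⟩ : W a) ∈ fac a ha) :
    cd a ha (pick a ha g0 g1 g2 g3 g4) ⟨3, x⟩ h = g3 ⟨x, h⟩ := by
  rw [pick, cd_mkv, dif_neg (by decide), dif_neg (by decide), dif_neg (by decide), dif_pos rfl]

lemma cd_pick4 (g0 g1 g2 g3 g4) (x : Fin (a 4)) (h : (⟨4, x⟩ : W a) ∈ fac a ha) :
    cd a ha (pick a ha g0 g1 g2 g3 g4) ⟨4, x⟩ h = g4 ⟨x, h⟩ := by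
  rw [pick, cd_mkv, dif_neg (by decide), dif_neg (by decide), dif_neg (by decide), dif_neg (by decide), dif_pos rfl]





lemma card_blkT_01 (b : ZMod 5) (h2 : b ≠ 2) (h3 : b ≠ 3) (h4 : b ≠ 4) :
    Fintype.card (blkT a ha b) = a b := by
  have hall : ∀ x : Fin (a b), (⟨b, x⟩ : W a) ∈ fac a ha :=
    fun x => mem_fac_of_fst a ha b h2 h3 h4 x
  rw [Fintype.card_congr (Equiv.subtypeUnivEquiv hall), Fintype.card_fin]

lemma mem_fac_snd_iff (b : ZMod 5) (hb : b = 2 ∨ b = 3 ∨ b = 4) (x : Fin (a b)) :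
    ((⟨b, x⟩ : W a) ∈ fac a ha) ↔ ¬ (x = (wt a ha b).2) := by
  rw [mem_fac_iff]
  constructor
  · rintro ⟨k2, k3, k4⟩ rfl
    rcases hb with rfl | rfl | rfl
    · exact k2 rfl
    · exact k3 rfl
    · exact k4 rfl
  · intro hx
    refine ⟨?_, ?_, ?_⟩ <;> intro hc
    · rcases hb with rfl | rfl | rfl
      · exact hx (eq_of_heq (Sigma.mk.inj_iff.1 hc).2)
      · exact (by decide : (3 : ZMod 5) ≠ 2) (congrArg Sigma.fst hc)
      · exact (by decide : (4 : ZMod 5) ≠ 2) (congrArg Sigma.fst hc)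
    · rcases hb with rfl | rfl | rfl
      · exact (by decide : (2 : ZMod 5) ≠ 3) (congrArg Sigma.fst hc)
      · exact hx (eq_of_heq (Sigma.mk.inj_iff.1 hc).2)
      · exact (by decide : (4 : ZMod 5) ≠ 3) (congrArg Sigma.fst hc)
    · rcases hb with rfl | rfl | rfl
      · exact (by decide : (2 : ZMod 5) ≠ 4) (congrArg Sigma.fst hc)
      · exact (by decide : (3 : ZMod 5) ≠ 4) (congrArg Sigma.fst hc)
      · exact hx (eq_of_heq (Sigma.mk.inj_iff.1 hc).2)

lemma card_blkT_234 (b : ZMod 5) (hb : b = 2 ∨ b = 3 ∨ b = 4) :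
    Fintype.card (blkT a ha b) = a b - 1 := by
  classical
  rw [Fintype.card_congr (Equiv.subtypeEquivRight (mem_fac_snd_iff a ha b hb)),
    Fintype.card_subtype_compl, Fintype.card_fin]
  exact congrArg (a b - ·) (Fintype.card_subtype_eq _)

noncomputable def Psi0 (p : (blkT a ha 0 → ZMod 2) × (blkT a ha 3 → ZMod 2)) : M a × M a × M a :=
  (pick a ha (fun _ => 1) (fun _ => 1) (fun _ => 1) (fun _ => 0) (fun _ => 0),
   pick a ha (fun _ => 1) (fun _ => 0) (fun _ => 0) (fun _ => 1) (fun _ => 0),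
   pick a ha p.1 (fun _ => 1) (fun _ => 0) p.2 (fun _ => 1))

lemma range_Psi0 : Set.range (Psi0 a ha) = F0 a ha := by
  ext v
  constructor
  · rintro ⟨p, rfl⟩
    refine ⟨?_, ?_, ?_, ?_, ?_, ?_, ?_, ?_, ?_, ?_, ?_, ?_, ?_⟩
    · intro x h
      simp only [Psi0, cd_pick0]
      try rfl
    · intro x h
      simp only [Psi0, cd_pick1]
      try rfl
    · intro x h
      simp only [Psi0, cd_pick2]
      try rfl
    · intro x h
      simp only [Psi0, cd_pick3]
      try rfl
    · intro x h
      simp only [Psi0, cd_pick4]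
      try rfl
    · intro x h
      simp only [Psi0, cd_pick0]
      try rfl
    · intro x h
      simp only [Psi0, cd_pick1]
      try rfl
    · intro x h
      simp only [Psi0, cd_pick2]
      try rfl
    · intro x h
      simp only [Psi0, cd_pick3]
      try rfl
    · intro x h
      simp only [Psi0, cd_pick4]
      try rfl
    · intro x h
      simp only [Psi0, cd_pick1]
      try rfl
    · intro x h
      simp only [Psi0, cd_pick2]
      try rfl
    · intro x h
      simp only [Psi0, cd_pick4]
      try rfl
  · intro hv
    obtain ⟨h1, h2, h3, h4, h5, h6, h7, h8, h9, h10, h11, h12, h13⟩ := hv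
    refine ⟨(fun x => cd a ha v.2.2 ⟨0, x.1⟩ x.2, fun x => cd a ha v.2.2 ⟨3, x.1⟩ x.2), ?_⟩
    refine Prod.ext ?_ (Prod.ext ?_ ?_)
    · apply cd_ext a ha
      intro i x h
      rcases zmod5_cases i with hi | hi | hi | hi | hi <;> subst hi
      · simp only [Psi0, cd_pick0]
        exact (h1 x h).symm
      · simp only [Psi0, cd_pick1]
        exact (h2 x h).symm
      · simp only [Psi0, cd_pick2]
        exact (h3 x h).symm
      · simp only [Psi0, cd_pick3]
        exact (h4 x h).symm
      · simp only [Psi0, cd_pick4]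
        exact (h5 x h).symm
    · apply cd_ext a ha
      intro i x h
      rcases zmod5_cases i with hi | hi | hi | hi | hi <;> subst hi
      · simp only [Psi0, cd_pick0]
        exact (h6 x h).symm
      · simp only [Psi0, cd_pick1]
        exact (h7 x h).symm
      · simp only [Psi0, cd_pick2]
        exact (h8 x h).symm
      · simp only [Psi0, cd_pick3]
        exact (h9 x h).symm
      · simp only [Psi0, cd_pick4]
        exact (h10 x h).symm
    · apply cd_ext a ha
      intro i x h
      rcases zmod5_cases i with hi | hi | hi | hi | hi <;> subst hi
      · simp only [Psi0, cd_pick0]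
        try rfl
      · simp only [Psi0, cd_pick1]
        exact (h11 x h).symm
      · simp only [Psi0, cd_pick2]
        exact (h12 x h).symm
      · simp only [Psi0, cd_pick3]
        try rfl
      · simp only [Psi0, cd_pick4]
        exact (h13 x h).symm

lemma psi0_inj : Function.Injective (Psi0 a ha) := by
  intro p q hpq
  refine Prod.ext ?_ ?_
  · funext x
    have hc := congrArg (fun m : (M a × M a × M a) => cd a ha m.2.2 ⟨0, x.1⟩ x.2) hpq
    simp only [Psi0, cd_pick0] at hc
    exact hc
  · funext x
    have hc := congrArg (fun m : (M a × M a × M a) => cd a ha m.2.2 ⟨3, x.1⟩ x.2) hpq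
    simp only [Psi0, cd_pick3] at hc
    exact hc

noncomputable def Psi1 (p : (blkT a ha 1 → ZMod 2) × (blkT a ha 4 → ZMod 2)) : M a × M a × M a :=
  (pick a ha (fun _ => 1) p.1 (fun _ => 1) (fun _ => 0) p.2,
   pick a ha (fun _ => 1) (fun x => 1 + p.1 x) (fun _ => 0) (fun _ => 1) p.2,
   pick a ha (fun _ => 0) (fun _ => 1) (fun _ => 0) (fun _ => 0) (fun _ => 1))

lemma range_Psi1 : Set.range (Psi1 a ha) = F1 a ha := by
  ext v
  constructor
  · rintro ⟨p, rfl⟩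
    refine ⟨?_, ?_, ?_, ?_, ?_, ?_, ?_, ?_, ?_, ?_, ?_, ?_, ?_⟩
    · intro x h
      simp only [Psi1, cd_pick0]
      try rfl
    · intro x h
      simp only [Psi1, cd_pick2]
      try rfl
    · intro x h
      simp only [Psi1, cd_pick3]
      try rfl
    · intro x h
      simp only [Psi1, cd_pick0]
      try rfl
    · intro x h
      simp only [Psi1, cd_pick1]
      exact (by decide : ∀ t : ZMod 2, t + (1 + t) = 1) _
    · intro x h
      simp only [Psi1, cd_pick2]
      try rfl
    · intro x h
      simp only [Psi1, cd_pick3]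
      try rfl
    · intro x h
      simp only [Psi1, cd_pick4]
      exact zmod2_add_self _
    · intro x h
      simp only [Psi1, cd_pick0]
      try rfl
    · intro x h
      simp only [Psi1, cd_pick1]
      try rfl
    · intro x h
      simp only [Psi1, cd_pick2]
      try rfl
    · intro x h
      simp only [Psi1, cd_pick3]
      try rfl
    · intro x h
      simp only [Psi1, cd_pick4]
      try rfl
  · intro hv
    obtain ⟨h1, h2, h3, h4, h5, h6, h7, h8, h9, h10, h11, h12, h13⟩ := hv
    refine ⟨(fun x => cd a ha v.1 ⟨1, x.1⟩ x.2, fun x => cd a ha v.1 ⟨4, x.1⟩ x.2), ?_⟩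
    refine Prod.ext ?_ (Prod.ext ?_ ?_)
    · apply cd_ext a ha
      intro i x h
      rcases zmod5_cases i with hi | hi | hi | hi | hi <;> subst hi
      · simp only [Psi1, cd_pick0]
        exact (h1 x h).symm
      · simp only [Psi1, cd_pick1]
        try rfl
      · simp only [Psi1, cd_pick2]
        exact (h2 x h).symm
      · simp only [Psi1, cd_pick3]
        exact (h3 x h).symm
      · simp only [Psi1, cd_pick4]
        try rfl
    · apply cd_ext a ha
      intro i x h
      rcases zmod5_cases i with hi | hi | hi | hi | hi <;> subst hi
      · simp only [Psi1, cd_pick0]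
        exact (h4 x h).symm
      · simp only [Psi1, cd_pick1]
        exact ((by decide : ∀ s t : ZMod 2, s + t = 1 → 1 + s = t) _ _ (h5 x h))
      · simp only [Psi1, cd_pick2]
        exact (h6 x h).symm
      · simp only [Psi1, cd_pick3]
        exact (h7 x h).symm
      · simp only [Psi1, cd_pick4]
        exact ((by decide : ∀ s t : ZMod 2, s + t = 0 → s = t) _ _ (h8 x h))
    · apply cd_ext a ha
      intro i x h
      rcases zmod5_cases i with hi | hi | hi | hi | hi <;> subst hi
      · simp only [Psi1, cd_pick0]
        exact (h9 x h).symm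
      · simp only [Psi1, cd_pick1]
        exact (h10 x h).symm
      · simp only [Psi1, cd_pick2]
        exact (h11 x h).symm
      · simp only [Psi1, cd_pick3]
        exact (h12 x h).symm
      · simp only [Psi1, cd_pick4]
        exact (h13 x h).symm

lemma psi1_inj : Function.Injective (Psi1 a ha) := by
  intro p q hpq
  refine Prod.ext ?_ ?_
  · funext x
    have hc := congrArg (fun m : (M a × M a × M a) => cd a ha m.1 ⟨1, x.1⟩ x.2) hpq
    simp only [Psi1, cd_pick1] at hc
    exact hc
  · funext x
    have hc := congrArg (fun m : (M a × M a × M a) => cd a ha m.1 ⟨4, x.1⟩ x.2) hpq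
    simp only [Psi1, cd_pick4] at hc
    exact hc

noncomputable def Psi2 (p : (blkT a ha 0 → ZMod 2) × (blkT a ha 2 → ZMod 2)) : M a × M a × M a :=
  (pick a ha (fun _ => 1) (fun _ => 0) (fun _ => 1) (fun _ => 0) (fun _ => 0),
   pick a ha p.1 (fun _ => 1) p.2 (fun _ => 1) (fun _ => 0),
   pick a ha (fun x => 1 + p.1 x) (fun _ => 1) p.2 (fun _ => 0) (fun _ => 1))

lemma range_Psi2 : Set.range (Psi2 a ha) = F2 a ha := by
  ext v
  constructor
  · rintro ⟨p, rfl⟩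
    refine ⟨?_, ?_, ?_, ?_, ?_, ?_, ?_, ?_, ?_, ?_, ?_, ?_, ?_⟩
    · intro x h
      simp only [Psi2, cd_pick0]
      try rfl
    · intro x h
      simp only [Psi2, cd_pick1]
      try rfl
    · intro x h
      simp only [Psi2, cd_pick2]
      try rfl
    · intro x h
      simp only [Psi2, cd_pick3]
      try rfl
    · intro x h
      simp only [Psi2, cd_pick4]
      try rfl
    · intro x h
      simp only [Psi2, cd_pick1]
      try rfl
    · intro x h
      simp only [Psi2, cd_pick3]
      try rfl
    · intro x h
      simp only [Psi2, cd_pick4]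
      try rfl
    · intro x h
      simp only [Psi2, cd_pick0]
      exact (by decide : ∀ t : ZMod 2, t + (1 + t) = 1) _
    · intro x h
      simp only [Psi2, cd_pick1]
      try rfl
    · intro x h
      simp only [Psi2, cd_pick2]
      exact zmod2_add_self _
    · intro x h
      simp only [Psi2, cd_pick3]
      try rfl
    · intro x h
      simp only [Psi2, cd_pick4]
      try rfl
  · intro hv
    obtain ⟨h1, h2, h3, h4, h5, h6, h7, h8, h9, h10, h11, h12, h13⟩ := hv
    refine ⟨(fun x => cd a ha v.2.1 ⟨0, x.1⟩ x.2, fun x => cd a ha v.2.1 ⟨2, x.1⟩ x.2), ?_⟩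
    refine Prod.ext ?_ (Prod.ext ?_ ?_)
    · apply cd_ext a ha
      intro i x h
      rcases zmod5_cases i with hi | hi | hi | hi | hi <;> subst hi
      · simp only [Psi2, cd_pick0]
        exact (h1 x h).symm
      · simp only [Psi2, cd_pick1]
        exact (h2 x h).symm
      · simp only [Psi2, cd_pick2]
        exact (h3 x h).symm
      · simp only [Psi2, cd_pick3]
        exact (h4 x h).symm
      · simp only [Psi2, cd_pick4]
        exact (h5 x h).symm
    · apply cd_ext a ha
      intro i x h
      rcases zmod5_cases i with hi | hi | hi | hi | hi <;> subst hi
      · simp only [Psi2, cd_pick0]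
        try rfl
      · simp only [Psi2, cd_pick1]
        exact (h6 x h).symm
      · simp only [Psi2, cd_pick2]
        try rfl
      · simp only [Psi2, cd_pick3]
        exact (h7 x h).symm
      · simp only [Psi2, cd_pick4]
        exact (h8 x h).symm
    · apply cd_ext a ha
      intro i x h
      rcases zmod5_cases i with hi | hi | hi | hi | hi <;> subst hi
      · simp only [Psi2, cd_pick0]
        exact ((by decide : ∀ s t : ZMod 2, s + t = 1 → 1 + s = t) _ _ (h9 x h))
      · simp only [Psi2, cd_pick1]
        exact (h10 x h).symm
      · simp only [Psi2, cd_pick2]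
        exact ((by decide : ∀ s t : ZMod 2, s + t = 0 → s = t) _ _ (h11 x h))
      · simp only [Psi2, cd_pick3]
        exact (h12 x h).symm
      · simp only [Psi2, cd_pick4]
        exact (h13 x h).symm

lemma psi2_inj : Function.Injective (Psi2 a ha) := by
  intro p q hpq
  refine Prod.ext ?_ ?_
  · funext x
    have hc := congrArg (fun m : (M a × M a × M a) => cd a ha m.2.1 ⟨0, x.1⟩ x.2) hpq
    simp only [Psi2, cd_pick0] at hc
    exact hc
  · funext x
    have hc := congrArg (fun m : (M a × M a × M a) => cd a ha m.2.1 ⟨2, x.1⟩ x.2) hpq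
    simp only [Psi2, cd_pick2] at hc
    exact hc

noncomputable def Psi3 (p : (blkT a ha 1 → ZMod 2) × (blkT a ha 3 → ZMod 2)) : M a × M a × M a :=
  (pick a ha (fun _ => 1) p.1 (fun _ => 1) p.2 (fun _ => 0),
   pick a ha (fun _ => 0) (fun _ => 1) (fun _ => 0) (fun _ => 1) (fun _ => 0),
   pick a ha (fun _ => 1) (fun _ => 1) (fun _ => 0) (fun _ => 0) (fun _ => 1))

lemma range_Psi3 : Set.range (Psi3 a ha) = F3 a ha := by
  ext v
  constructor
  · rintro ⟨p, rfl⟩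
    refine ⟨?_, ?_, ?_, ?_, ?_, ?_, ?_, ?_, ?_, ?_, ?_, ?_, ?_⟩
    · intro x h
      simp only [Psi3, cd_pick0]
      try rfl
    · intro x h
      simp only [Psi3, cd_pick2]
      try rfl
    · intro x h
      simp only [Psi3, cd_pick4]
      try rfl
    · intro x h
      simp only [Psi3, cd_pick0]
      try rfl
    · intro x h
      simp only [Psi3, cd_pick1]
      try rfl
    · intro x h
      simp only [Psi3, cd_pick2]
      try rfl
    · intro x h
      simp only [Psi3, cd_pick3]
      try rfl
    · intro x h
      simp only [Psi3, cd_pick4]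
      try rfl
    · intro x h
      simp only [Psi3, cd_pick0]
      try rfl
    · intro x h
      simp only [Psi3, cd_pick1]
      try rfl
    · intro x h
      simp only [Psi3, cd_pick2]
      try rfl
    · intro x h
      simp only [Psi3, cd_pick3]
      try rfl
    · intro x h
      simp only [Psi3, cd_pick4]
      try rfl
  · intro hv
    obtain ⟨h1, h2, h3, h4, h5, h6, h7, h8, h9, h10, h11, h12, h13⟩ := hv
    refine ⟨(fun x => cd a ha v.1 ⟨1, x.1⟩ x.2, fun x => cd a ha v.1 ⟨3, x.1⟩ x.2), ?_⟩
    refine Prod.ext ?_ (Prod.ext ?_ ?_)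
    · apply cd_ext a ha
      intro i x h
      rcases zmod5_cases i with hi | hi | hi | hi | hi <;> subst hi
      · simp only [Psi3, cd_pick0]
        exact (h1 x h).symm
      · simp only [Psi3, cd_pick1]
        try rfl
      · simp only [Psi3, cd_pick2]
        exact (h2 x h).symm
      · simp only [Psi3, cd_pick3]
        try rfl
      · simp only [Psi3, cd_pick4]
        exact (h3 x h).symm
    · apply cd_ext a ha
      intro i x h
      rcases zmod5_cases i with hi | hi | hi | hi | hi <;> subst hi
      · simp only [Psi3, cd_pick0]
        exact (h4 x h).symm
      · simp only [Psi3, cd_pick1]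
        exact (h5 x h).symm
      · simp only [Psi3, cd_pick2]
        exact (h6 x h).symm
      · simp only [Psi3, cd_pick3]
        exact (h7 x h).symm
      · simp only [Psi3, cd_pick4]
        exact (h8 x h).symm
    · apply cd_ext a ha
      intro i x h
      rcases zmod5_cases i with hi | hi | hi | hi | hi <;> subst hi
      · simp only [Psi3, cd_pick0]
        exact (h9 x h).symm
      · simp only [Psi3, cd_pick1]
        exact (h10 x h).symm
      · simp only [Psi3, cd_pick2]
        exact (h11 x h).symm
      · simp only [Psi3, cd_pick3]
        exact (h12 x h).symm
      · simp only [Psi3, cd_pick4]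
        exact (h13 x h).symm

lemma psi3_inj : Function.Injective (Psi3 a ha) := by
  intro p q hpq
  refine Prod.ext ?_ ?_
  · funext x
    have hc := congrArg (fun m : (M a × M a × M a) => cd a ha m.1 ⟨1, x.1⟩ x.2) hpq
    simp only [Psi3, cd_pick1] at hc
    exact hc
  · funext x
    have hc := congrArg (fun m : (M a × M a × M a) => cd a ha m.1 ⟨3, x.1⟩ x.2) hpq
    simp only [Psi3, cd_pick3] at hc
    exact hc


noncomputable def Psi4 (p : Bool × (blkT a ha 2 → ZMod 2) × (blkT a ha 4 → ZMod 2)) :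
    M a × M a × M a :=
  (pick a ha (fun _ => 1) (fun _ => 1) (fun _ => 1) (fun _ => 0) (fun _ => 0),
   pick a ha (fun _ => if p.1 then 1 else 0) (fun _ => if p.1 then 0 else 1) p.2.1
     (fun _ => 1) p.2.2,
   pick a ha (fun _ => 1) (fun _ => 1) (fun _ => 0) (fun _ => 0) (fun _ => 1))

lemma range_Psi4 : Set.range (Psi4 a ha) = F4 a ha := by
  ext v
  constructor
  · rintro ⟨p, rfl⟩
    refine ⟨?_, ?_, ?_, ?_, ?_, ?_, ?_, ?_, ?_, ?_, ?_, ?_⟩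
    · intro x h; simp only [Psi4, cd_pick0]
    · intro x h; simp only [Psi4, cd_pick1]
    · intro x h; simp only [Psi4, cd_pick2]
    · intro x h; simp only [Psi4, cd_pick3]
    · intro x h; simp only [Psi4, cd_pick4]
    · rcases Bool.eq_false_or_eq_true p.1 with hp | hp
      · refine Or.inr ⟨?_, ?_⟩ <;> intro x h
        · simp only [Psi4, cd_pick0, hp]; decide
        · simp only [Psi4, cd_pick1, hp]; decide
      · refine Or.inl ⟨?_, ?_⟩ <;> intro x h
        · simp only [Psi4, cd_pick0, hp]; decide
        · simp only [Psi4, cd_pick1, hp]; decide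
    · intro x h; simp only [Psi4, cd_pick3]
    · intro x h; simp only [Psi4, cd_pick0]
    · intro x h; simp only [Psi4, cd_pick1]
    · intro x h; simp only [Psi4, cd_pick2]
    · intro x h; simp only [Psi4, cd_pick3]
    · intro x h; simp only [Psi4, cd_pick4]
  · intro hv
    obtain ⟨h1, h2, h3, h4, h5, h6, h7, h8, h9, h10, h11, h12⟩ := hv
    rcases h6 with ⟨hr, hs⟩ | ⟨hr, hs⟩
    · refine ⟨(false, fun x => cd a ha v.2.1 ⟨2, x.1⟩ x.2,
        fun x => cd a ha v.2.1 ⟨4, x.1⟩ x.2), ?_⟩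
      refine Prod.ext ?_ (Prod.ext ?_ ?_)
      · apply cd_ext a ha
        intro i x h
        rcases zmod5_cases i with hi | hi | hi | hi | hi <;> subst hi
        · simp only [Psi4, cd_pick0]; exact (h1 x h).symm
        · simp only [Psi4, cd_pick1]; exact (h2 x h).symm
        · simp only [Psi4, cd_pick2]; exact (h3 x h).symm
        · simp only [Psi4, cd_pick3]; exact (h4 x h).symm
        · simp only [Psi4, cd_pick4]; exact (h5 x h).symm
      · apply cd_ext a ha
        intro i x h
        rcases zmod5_cases i with hi | hi | hi | hi | hi <;> subst hi
        · simp only [Psi4, cd_pick0]; exact (hr x h).symm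
        · simp only [Psi4, cd_pick1]; exact (hs x h).symm
        · simp only [Psi4, cd_pick2]
        · simp only [Psi4, cd_pick3]; exact (h7 x h).symm
        · simp only [Psi4, cd_pick4]
      · apply cd_ext a ha
        intro i x h
        rcases zmod5_cases i with hi | hi | hi | hi | hi <;> subst hi
        · simp only [Psi4, cd_pick0]; exact (h8 x h).symm
        · simp only [Psi4, cd_pick1]; exact (h9 x h).symm
        · simp only [Psi4, cd_pick2]; exact (h10 x h).symm
        · simp only [Psi4, cd_pick3]; exact (h11 x h).symm
        · simp only [Psi4, cd_pick4]; exact (h12 x h).symm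
    · refine ⟨(true, fun x => cd a ha v.2.1 ⟨2, x.1⟩ x.2,
        fun x => cd a ha v.2.1 ⟨4, x.1⟩ x.2), ?_⟩
      refine Prod.ext ?_ (Prod.ext ?_ ?_)
      · apply cd_ext a ha
        intro i x h
        rcases zmod5_cases i with hi | hi | hi | hi | hi <;> subst hi
        · simp only [Psi4, cd_pick0]; exact (h1 x h).symm
        · simp only [Psi4, cd_pick1]; exact (h2 x h).symm
        · simp only [Psi4, cd_pick2]; exact (h3 x h).symm
        · simp only [Psi4, cd_pick3]; exact (h4 x h).symm
        · simp only [Psi4, cd_pick4]; exact (h5 x h).symm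
      · apply cd_ext a ha
        intro i x h
        rcases zmod5_cases i with hi | hi | hi | hi | hi <;> subst hi
        · simp only [Psi4, cd_pick0]; exact (hr x h).symm
        · simp only [Psi4, cd_pick1]; exact (hs x h).symm
        · simp only [Psi4, cd_pick2]
        · simp only [Psi4, cd_pick3]; exact (h7 x h).symm
        · simp only [Psi4, cd_pick4]
      · apply cd_ext a ha
        intro i x h
        rcases zmod5_cases i with hi | hi | hi | hi | hi <;> subst hi
        · simp only [Psi4, cd_pick0]; exact (h8 x h).symm
        · simp only [Psi4, cd_pick1]; exact (h9 x h).symm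
        · simp only [Psi4, cd_pick2]; exact (h10 x h).symm
        · simp only [Psi4, cd_pick3]; exact (h11 x h).symm
        · simp only [Psi4, cd_pick4]; exact (h12 x h).symm

lemma psi4_inj : Function.Injective (Psi4 a ha) := by
  intro p q hpq
  have x0 : blkT a ha 0 :=
    ⟨⟨0, ha 0⟩, mem_fac_of_fst a ha 0 (by decide) (by decide) (by decide) _⟩
  have e0 : (if p.1 then (1 : ZMod 2) else 0) = (if q.1 then 1 else 0) := by
    have hc := congrArg (fun m : M a × M a × M a => cd a ha m.2.1 ⟨0, x0.1⟩ x0.2) hpq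
    simp only [Psi4, cd_pick0] at hc
    exact hc
  have hb : p.1 = q.1 := by
    rcases Bool.eq_false_or_eq_true p.1 with hp | hp <;>
      rcases Bool.eq_false_or_eq_true q.1 with hq | hq <;>
        rw [hp, hq] at e0 ⊢ <;> first | rfl | (exfalso; revert e0; decide)
  have h2 : p.2.1 = q.2.1 := by
    funext x
    have hc := congrArg (fun m : M a × M a × M a => cd a ha m.2.1 ⟨2, x.1⟩ x.2) hpq
    simp only [Psi4, cd_pick2] at hc
    exact hc
  have h3 : p.2.2 = q.2.2 := by
    funext x
    have hc := congrArg (fun m : M a × M a × M a => cd a ha m.2.1 ⟨4, x.1⟩ x.2) hpq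
    simp only [Psi4, cd_pick4] at hc
    exact hc
  exact Prod.ext hb (Prod.ext h2 h3)

noncomputable def E01 : M a × M a × M a :=
  (pick a ha (fun _ => 1) (fun _ => 1) (fun _ => 1) (fun _ => 0) (fun _ => 0),
   pick a ha (fun _ => 1) (fun _ => 0) (fun _ => 0) (fun _ => 1) (fun _ => 0),
   pick a ha (fun _ => 0) (fun _ => 1) (fun _ => 0) (fun _ => 0) (fun _ => 1))

noncomputable def E12 : M a × M a × M a :=
  (pick a ha (fun _ => 1) (fun _ => 0) (fun _ => 1) (fun _ => 0) (fun _ => 0),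
   pick a ha (fun _ => 1) (fun _ => 1) (fun _ => 0) (fun _ => 1) (fun _ => 0),
   pick a ha (fun _ => 0) (fun _ => 1) (fun _ => 0) (fun _ => 0) (fun _ => 1))

noncomputable def E23 : M a × M a × M a :=
  (pick a ha (fun _ => 1) (fun _ => 0) (fun _ => 1) (fun _ => 0) (fun _ => 0),
   pick a ha (fun _ => 0) (fun _ => 1) (fun _ => 0) (fun _ => 1) (fun _ => 0),
   pick a ha (fun _ => 1) (fun _ => 1) (fun _ => 0) (fun _ => 0) (fun _ => 1))

noncomputable def E34 : M a × M a × M a :=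
  (pick a ha (fun _ => 1) (fun _ => 1) (fun _ => 1) (fun _ => 0) (fun _ => 0),
   pick a ha (fun _ => 0) (fun _ => 1) (fun _ => 0) (fun _ => 1) (fun _ => 0),
   pick a ha (fun _ => 1) (fun _ => 1) (fun _ => 0) (fun _ => 0) (fun _ => 1))

noncomputable def E40 : M a × M a × M a :=
  (pick a ha (fun _ => 1) (fun _ => 1) (fun _ => 1) (fun _ => 0) (fun _ => 0),
   pick a ha (fun _ => 1) (fun _ => 0) (fun _ => 0) (fun _ => 1) (fun _ => 0),
   pick a ha (fun _ => 1) (fun _ => 1) (fun _ => 0) (fun _ => 0) (fun _ => 1))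

lemma E01_mem_F0 : E01 a ha ∈ F0 a ha := by
  refine ⟨?_, ?_, ?_, ?_, ?_, ?_, ?_, ?_, ?_, ?_, ?_, ?_, ?_⟩
  · intro x h
    simp only [E01, cd_pick0]
    try rfl
  · intro x h
    simp only [E01, cd_pick1]
    try rfl
  · intro x h
    simp only [E01, cd_pick2]
    try rfl
  · intro x h
    simp only [E01, cd_pick3]
    try rfl
  · intro x h
    simp only [E01, cd_pick4]
    try rfl
  · intro x h
    simp only [E01, cd_pick0]
    try rfl
  · intro x h
    simp only [E01, cd_pick1]
    try rfl
  · intro x h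
    simp only [E01, cd_pick2]
    try rfl
  · intro x h
    simp only [E01, cd_pick3]
    try rfl
  · intro x h
    simp only [E01, cd_pick4]
    try rfl
  · intro x h
    simp only [E01, cd_pick1]
    try rfl
  · intro x h
    simp only [E01, cd_pick2]
    try rfl
  · intro x h
    simp only [E01, cd_pick4]
    try rfl

lemma E01_mem_F1 : E01 a ha ∈ F1 a ha := by
  refine ⟨?_, ?_, ?_, ?_, ?_, ?_, ?_, ?_, ?_, ?_, ?_, ?_, ?_⟩
  · intro x h
    simp only [E01, cd_pick0]
    try rfl
  · intro x h
    simp only [E01, cd_pick2]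
    try rfl
  · intro x h
    simp only [E01, cd_pick3]
    try rfl
  · intro x h
    simp only [E01, cd_pick0]
    try rfl
  · intro x h
    simp only [E01, cd_pick1]
    decide
  · intro x h
    simp only [E01, cd_pick2]
    try rfl
  · intro x h
    simp only [E01, cd_pick3]
    try rfl
  · intro x h
    simp only [E01, cd_pick4]
    decide
  · intro x h
    simp only [E01, cd_pick0]
    try rfl
  · intro x h
    simp only [E01, cd_pick1]
    try rfl
  · intro x h
    simp only [E01, cd_pick2]
    try rfl
  · intro x h
    simp only [E01, cd_pick3]
    try rfl
  · intro x h
    simp only [E01, cd_pick4]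
    try rfl

lemma E12_mem_F1 : E12 a ha ∈ F1 a ha := by
  refine ⟨?_, ?_, ?_, ?_, ?_, ?_, ?_, ?_, ?_, ?_, ?_, ?_, ?_⟩
  · intro x h
    simp only [E12, cd_pick0]
    try rfl
  · intro x h
    simp only [E12, cd_pick2]
    try rfl
  · intro x h
    simp only [E12, cd_pick3]
    try rfl
  · intro x h
    simp only [E12, cd_pick0]
    try rfl
  · intro x h
    simp only [E12, cd_pick1]
    decide
  · intro x h
    simp only [E12, cd_pick2]
    try rfl
  · intro x h
    simp only [E12, cd_pick3]
    try rfl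
  · intro x h
    simp only [E12, cd_pick4]
    decide
  · intro x h
    simp only [E12, cd_pick0]
    try rfl
  · intro x h
    simp only [E12, cd_pick1]
    try rfl
  · intro x h
    simp only [E12, cd_pick2]
    try rfl
  · intro x h
    simp only [E12, cd_pick3]
    try rfl
  · intro x h
    simp only [E12, cd_pick4]
    try rfl

lemma E12_mem_F2 : E12 a ha ∈ F2 a ha := by
  refine ⟨?_, ?_, ?_, ?_, ?_, ?_, ?_, ?_, ?_, ?_, ?_, ?_, ?_⟩
  · intro x h
    simp only [E12, cd_pick0]
    try rfl
  · intro x h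
    simp only [E12, cd_pick1]
    try rfl
  · intro x h
    simp only [E12, cd_pick2]
    try rfl
  · intro x h
    simp only [E12, cd_pick3]
    try rfl
  · intro x h
    simp only [E12, cd_pick4]
    try rfl
  · intro x h
    simp only [E12, cd_pick1]
    try rfl
  · intro x h
    simp only [E12, cd_pick3]
    try rfl
  · intro x h
    simp only [E12, cd_pick4]
    try rfl
  · intro x h
    simp only [E12, cd_pick0]
    decide
  · intro x h
    simp only [E12, cd_pick1]
    try rfl
  · intro x h
    simp only [E12, cd_pick2]
    decide
  · intro x h
    simp only [E12, cd_pick3]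
    try rfl
  · intro x h
    simp only [E12, cd_pick4]
    try rfl

lemma E23_mem_F2 : E23 a ha ∈ F2 a ha := by
  refine ⟨?_, ?_, ?_, ?_, ?_, ?_, ?_, ?_, ?_, ?_, ?_, ?_, ?_⟩
  · intro x h
    simp only [E23, cd_pick0]
    try rfl
  · intro x h
    simp only [E23, cd_pick1]
    try rfl
  · intro x h
    simp only [E23, cd_pick2]
    try rfl
  · intro x h
    simp only [E23, cd_pick3]
    try rfl
  · intro x h
    simp only [E23, cd_pick4]
    try rfl
  · intro x h
    simp only [E23, cd_pick1]
    try rfl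
  · intro x h
    simp only [E23, cd_pick3]
    try rfl
  · intro x h
    simp only [E23, cd_pick4]
    try rfl
  · intro x h
    simp only [E23, cd_pick0]
    decide
  · intro x h
    simp only [E23, cd_pick1]
    try rfl
  · intro x h
    simp only [E23, cd_pick2]
    decide
  · intro x h
    simp only [E23, cd_pick3]
    try rfl
  · intro x h
    simp only [E23, cd_pick4]
    try rfl

lemma E23_mem_F3 : E23 a ha ∈ F3 a ha := by
  refine ⟨?_, ?_, ?_, ?_, ?_, ?_, ?_, ?_, ?_, ?_, ?_, ?_, ?_⟩
  · intro x h
    simp only [E23, cd_pick0]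
    try rfl
  · intro x h
    simp only [E23, cd_pick2]
    try rfl
  · intro x h
    simp only [E23, cd_pick4]
    try rfl
  · intro x h
    simp only [E23, cd_pick0]
    try rfl
  · intro x h
    simp only [E23, cd_pick1]
    try rfl
  · intro x h
    simp only [E23, cd_pick2]
    try rfl
  · intro x h
    simp only [E23, cd_pick3]
    try rfl
  · intro x h
    simp only [E23, cd_pick4]
    try rfl
  · intro x h
    simp only [E23, cd_pick0]
    try rfl
  · intro x h
    simp only [E23, cd_pick1]
    try rfl
  · intro x h
    simp only [E23, cd_pick2]
    try rfl
  · intro x h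
    simp only [E23, cd_pick3]
    try rfl
  · intro x h
    simp only [E23, cd_pick4]
    try rfl

lemma E34_mem_F3 : E34 a ha ∈ F3 a ha := by
  refine ⟨?_, ?_, ?_, ?_, ?_, ?_, ?_, ?_, ?_, ?_, ?_, ?_, ?_⟩
  · intro x h
    simp only [E34, cd_pick0]
    try rfl
  · intro x h
    simp only [E34, cd_pick2]
    try rfl
  · intro x h
    simp only [E34, cd_pick4]
    try rfl
  · intro x h
    simp only [E34, cd_pick0]
    try rfl
  · intro x h
    simp only [E34, cd_pick1]
    try rfl
  · intro x h
    simp only [E34, cd_pick2]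
    try rfl
  · intro x h
    simp only [E34, cd_pick3]
    try rfl
  · intro x h
    simp only [E34, cd_pick4]
    try rfl
  · intro x h
    simp only [E34, cd_pick0]
    try rfl
  · intro x h
    simp only [E34, cd_pick1]
    try rfl
  · intro x h
    simp only [E34, cd_pick2]
    try rfl
  · intro x h
    simp only [E34, cd_pick3]
    try rfl
  · intro x h
    simp only [E34, cd_pick4]
    try rfl

lemma E34_mem_F4 : E34 a ha ∈ F4 a ha := by
  refine ⟨?_, ?_, ?_, ?_, ?_, ?_, ?_, ?_, ?_, ?_, ?_, ?_⟩
  · intro x h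
    simp only [E34, cd_pick0]
    try rfl
  · intro x h
    simp only [E34, cd_pick1]
    try rfl
  · intro x h
    simp only [E34, cd_pick2]
    try rfl
  · intro x h
    simp only [E34, cd_pick3]
    try rfl
  · intro x h
    simp only [E34, cd_pick4]
    try rfl
  · refine Or.inl ⟨?_, ?_⟩ <;> intro x h <;>
      simp only [E34, cd_pick0, cd_pick1] <;> decide
  · intro x h
    simp only [E34, cd_pick3]
    try rfl
  · intro x h
    simp only [E34, cd_pick0]
    try rfl
  · intro x h
    simp only [E34, cd_pick1]
    try rfl
  · intro x h
    simp only [E34, cd_pick2]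
    try rfl
  · intro x h
    simp only [E34, cd_pick3]
    try rfl
  · intro x h
    simp only [E34, cd_pick4]
    try rfl

lemma E40_mem_F4 : E40 a ha ∈ F4 a ha := by
  refine ⟨?_, ?_, ?_, ?_, ?_, ?_, ?_, ?_, ?_, ?_, ?_, ?_⟩
  · intro x h
    simp only [E40, cd_pick0]
    try rfl
  · intro x h
    simp only [E40, cd_pick1]
    try rfl
  · intro x h
    simp only [E40, cd_pick2]
    try rfl
  · intro x h
    simp only [E40, cd_pick3]
    try rfl
  · intro x h
    simp only [E40, cd_pick4]
    try rfl
  · refine Or.inr ⟨?_, ?_⟩ <;> intro x h <;>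
      simp only [E40, cd_pick0, cd_pick1] <;> decide
  · intro x h
    simp only [E40, cd_pick3]
    try rfl
  · intro x h
    simp only [E40, cd_pick0]
    try rfl
  · intro x h
    simp only [E40, cd_pick1]
    try rfl
  · intro x h
    simp only [E40, cd_pick2]
    try rfl
  · intro x h
    simp only [E40, cd_pick3]
    try rfl
  · intro x h
    simp only [E40, cd_pick4]
    try rfl

lemma E40_mem_F0 : E40 a ha ∈ F0 a ha := by
  refine ⟨?_, ?_, ?_, ?_, ?_, ?_, ?_, ?_, ?_, ?_, ?_, ?_, ?_⟩
  · intro x h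
    simp only [E40, cd_pick0]
    try rfl
  · intro x h
    simp only [E40, cd_pick1]
    try rfl
  · intro x h
    simp only [E40, cd_pick2]
    try rfl
  · intro x h
    simp only [E40, cd_pick3]
    try rfl
  · intro x h
    simp only [E40, cd_pick4]
    try rfl
  · intro x h
    simp only [E40, cd_pick0]
    try rfl
  · intro x h
    simp only [E40, cd_pick1]
    try rfl
  · intro x h
    simp only [E40, cd_pick2]
    try rfl
  · intro x h
    simp only [E40, cd_pick3]
    try rfl
  · intro x h
    simp only [E40, cd_pick4]
    try rfl
  · intro x h
    simp only [E40, cd_pick1]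
    try rfl
  · intro x h
    simp only [E40, cd_pick2]
    try rfl
  · intro x h
    simp only [E40, cd_pick4]
    try rfl

lemma inter01 (v : M a × M a × M a) (hA : v ∈ F0 a ha) (hB : v ∈ F1 a ha) :
    v = E01 a ha := by
  obtain ⟨g1, g2, g3, g4, g5, g6, g7, g8, g9, g10, g11, g12, g13⟩ := hA
  obtain ⟨k1, k2, k3, k4, k5, k6, k7, k8, k9, k10, k11, k12, k13⟩ := hB
  refine Prod.ext ?_ (Prod.ext ?_ ?_)
  · apply cd_ext a ha
    intro i x h
    rcases zmod5_cases i with hi | hi | hi | hi | hi <;> subst hi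
    · simp only [E01, cd_pick0]
      exact g1 x h
    · simp only [E01, cd_pick1]
      exact g2 x h
    · simp only [E01, cd_pick2]
      exact g3 x h
    · simp only [E01, cd_pick3]
      exact g4 x h
    · simp only [E01, cd_pick4]
      exact g5 x h
  · apply cd_ext a ha
    intro i x h
    rcases zmod5_cases i with hi | hi | hi | hi | hi <;> subst hi
    · simp only [E01, cd_pick0]
      exact g6 x h
    · simp only [E01, cd_pick1]
      exact g7 x h
    · simp only [E01, cd_pick2]
      exact g8 x h
    · simp only [E01, cd_pick3]
      exact g9 x h
    · simp only [E01, cd_pick4]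
      exact g10 x h
  · apply cd_ext a ha
    intro i x h
    rcases zmod5_cases i with hi | hi | hi | hi | hi <;> subst hi
    · simp only [E01, cd_pick0]
      exact k9 x h
    · simp only [E01, cd_pick1]
      exact k10 x h
    · simp only [E01, cd_pick2]
      exact k11 x h
    · simp only [E01, cd_pick3]
      exact k12 x h
    · simp only [E01, cd_pick4]
      exact k13 x h

lemma inter12 (v : M a × M a × M a) (hA : v ∈ F1 a ha) (hB : v ∈ F2 a ha) :
    v = E12 a ha := by
  obtain ⟨g1, g2, g3, g4, g5, g6, g7, g8, g9, g10, g11, g12, g13⟩ := hA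
  obtain ⟨k1, k2, k3, k4, k5, k6, k7, k8, k9, k10, k11, k12, k13⟩ := hB
  refine Prod.ext ?_ (Prod.ext ?_ ?_)
  · apply cd_ext a ha
    intro i x h
    rcases zmod5_cases i with hi | hi | hi | hi | hi <;> subst hi
    · simp only [E12, cd_pick0]
      exact k1 x h
    · simp only [E12, cd_pick1]
      exact k2 x h
    · simp only [E12, cd_pick2]
      exact k3 x h
    · simp only [E12, cd_pick3]
      exact k4 x h
    · simp only [E12, cd_pick4]
      exact k5 x h
  · apply cd_ext a ha
    intro i x h
    rcases zmod5_cases i with hi | hi | hi | hi | hi <;> subst hi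
    · simp only [E12, cd_pick0]
      exact g4 x h
    · simp only [E12, cd_pick1]
      exact k6 x h
    · simp only [E12, cd_pick2]
      exact g6 x h
    · simp only [E12, cd_pick3]
      exact k7 x h
    · simp only [E12, cd_pick4]
      exact k8 x h
  · apply cd_ext a ha
    intro i x h
    rcases zmod5_cases i with hi | hi | hi | hi | hi <;> subst hi
    · simp only [E12, cd_pick0]
      exact g9 x h
    · simp only [E12, cd_pick1]
      exact g10 x h
    · simp only [E12, cd_pick2]
      exact g11 x h
    · simp only [E12, cd_pick3]
      exact g12 x h
    · simp only [E12, cd_pick4]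
      exact g13 x h

lemma inter23 (v : M a × M a × M a) (hA : v ∈ F2 a ha) (hB : v ∈ F3 a ha) :
    v = E23 a ha := by
  obtain ⟨g1, g2, g3, g4, g5, g6, g7, g8, g9, g10, g11, g12, g13⟩ := hA
  obtain ⟨k1, k2, k3, k4, k5, k6, k7, k8, k9, k10, k11, k12, k13⟩ := hB
  refine Prod.ext ?_ (Prod.ext ?_ ?_)
  · apply cd_ext a ha
    intro i x h
    rcases zmod5_cases i with hi | hi | hi | hi | hi <;> subst hi
    · simp only [E23, cd_pick0]
      exact g1 x h
    · simp only [E23, cd_pick1]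
      exact g2 x h
    · simp only [E23, cd_pick2]
      exact g3 x h
    · simp only [E23, cd_pick3]
      exact g4 x h
    · simp only [E23, cd_pick4]
      exact g5 x h
  · apply cd_ext a ha
    intro i x h
    rcases zmod5_cases i with hi | hi | hi | hi | hi <;> subst hi
    · simp only [E23, cd_pick0]
      exact k4 x h
    · simp only [E23, cd_pick1]
      exact k5 x h
    · simp only [E23, cd_pick2]
      exact k6 x h
    · simp only [E23, cd_pick3]
      exact k7 x h
    · simp only [E23, cd_pick4]
      exact k8 x h
  · apply cd_ext a ha
    intro i x h
    rcases zmod5_cases i with hi | hi | hi | hi | hi <;> subst hi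
    · simp only [E23, cd_pick0]
      exact k9 x h
    · simp only [E23, cd_pick1]
      exact k10 x h
    · simp only [E23, cd_pick2]
      exact k11 x h
    · simp only [E23, cd_pick3]
      exact k12 x h
    · simp only [E23, cd_pick4]
      exact k13 x h

lemma inter34 (v : M a × M a × M a) (hA : v ∈ F3 a ha) (hB : v ∈ F4 a ha) :
    v = E34 a ha := by
  obtain ⟨g1, g2, g3, g4, g5, g6, g7, g8, g9, g10, g11, g12, g13⟩ := hA
  obtain ⟨k1, k2, k3, k4, k5, k6, k7, k8, k9, k10, k11, k12⟩ := hB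
  refine Prod.ext ?_ (Prod.ext ?_ ?_)
  · apply cd_ext a ha
    intro i x h
    rcases zmod5_cases i with hi | hi | hi | hi | hi <;> subst hi
    · simp only [E34, cd_pick0]
      exact k1 x h
    · simp only [E34, cd_pick1]
      exact k2 x h
    · simp only [E34, cd_pick2]
      exact k3 x h
    · simp only [E34, cd_pick3]
      exact k4 x h
    · simp only [E34, cd_pick4]
      exact k5 x h
  · apply cd_ext a ha
    intro i x h
    rcases zmod5_cases i with hi | hi | hi | hi | hi <;> subst hi
    · simp only [E34, cd_pick0]
      exact g4 x h
    · simp only [E34, cd_pick1]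
      exact g5 x h
    · simp only [E34, cd_pick2]
      exact g6 x h
    · simp only [E34, cd_pick3]
      exact g7 x h
    · simp only [E34, cd_pick4]
      exact g8 x h
  · apply cd_ext a ha
    intro i x h
    rcases zmod5_cases i with hi | hi | hi | hi | hi <;> subst hi
    · simp only [E34, cd_pick0]
      exact g9 x h
    · simp only [E34, cd_pick1]
      exact g10 x h
    · simp only [E34, cd_pick2]
      exact g11 x h
    · simp only [E34, cd_pick3]
      exact g12 x h
    · simp only [E34, cd_pick4]
      exact g13 x h

lemma inter40 (v : M a × M a × M a) (hA : v ∈ F4 a ha) (hB : v ∈ F0 a ha) :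
    v = E40 a ha := by
  obtain ⟨g1, g2, g3, g4, g5, g6, g7, g8, g9, g10, g11, g12⟩ := hA
  obtain ⟨k1, k2, k3, k4, k5, k6, k7, k8, k9, k10, k11, k12, k13⟩ := hB
  refine Prod.ext ?_ (Prod.ext ?_ ?_)
  · apply cd_ext a ha
    intro i x h
    rcases zmod5_cases i with hi | hi | hi | hi | hi <;> subst hi
    · simp only [E40, cd_pick0]
      exact k1 x h
    · simp only [E40, cd_pick1]
      exact k2 x h
    · simp only [E40, cd_pick2]
      exact k3 x h
    · simp only [E40, cd_pick3]
      exact k4 x h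
    · simp only [E40, cd_pick4]
      exact k5 x h
  · apply cd_ext a ha
    intro i x h
    rcases zmod5_cases i with hi | hi | hi | hi | hi <;> subst hi
    · simp only [E40, cd_pick0]
      exact k6 x h
    · simp only [E40, cd_pick1]
      exact k7 x h
    · simp only [E40, cd_pick2]
      exact k8 x h
    · simp only [E40, cd_pick3]
      exact k9 x h
    · simp only [E40, cd_pick4]
      exact k10 x h
  · apply cd_ext a ha
    intro i x h
    rcases zmod5_cases i with hi | hi | hi | hi | hi <;> subst hi
    · simp only [E40, cd_pick0]
      exact g8 x h
    · simp only [E40, cd_pick1]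
      exact g9 x h
    · simp only [E40, cd_pick2]
      exact g10 x h
    · simp only [E40, cd_pick3]
      exact g11 x h
    · simp only [E40, cd_pick4]
      exact g12 x h

lemma inter02 (v : M a × M a × M a) (hA : v ∈ F0 a ha) (hB : v ∈ F2 a ha) : False := by
  obtain ⟨g1, g2, g3, g4, g5, g6, g7, g8, g9, g10, g11, g12, g13⟩ := hA
  obtain ⟨k1, k2, k3, k4, k5, k6, k7, k8, k9, k10, k11, k12, k13⟩ := hB
  exact nb1 a ha g2 k2

lemma inter03 (v : M a × M a × M a) (hA : v ∈ F0 a ha) (hB : v ∈ F3 a ha) : False := by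
  obtain ⟨g1, g2, g3, g4, g5, g6, g7, g8, g9, g10, g11, g12, g13⟩ := hA
  obtain ⟨k1, k2, k3, k4, k5, k6, k7, k8, k9, k10, k11, k12, k13⟩ := hB
  exact nb0 a ha g6 k4

lemma inter13 (v : M a × M a × M a) (hA : v ∈ F1 a ha) (hB : v ∈ F3 a ha) : False := by
  obtain ⟨g1, g2, g3, g4, g5, g6, g7, g8, g9, g10, g11, g12, g13⟩ := hA
  obtain ⟨k1, k2, k3, k4, k5, k6, k7, k8, k9, k10, k11, k12, k13⟩ := hB
  exact nb0 a ha g4 k4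

lemma inter14 (v : M a × M a × M a) (hA : v ∈ F1 a ha) (hB : v ∈ F4 a ha) : False := by
  obtain ⟨g1, g2, g3, g4, g5, g6, g7, g8, g9, g10, g11, g12, g13⟩ := hA
  obtain ⟨k1, k2, k3, k4, k5, k6, k7, k8, k9, k10, k11, k12⟩ := hB
  exact nb0 a ha k8 g9

lemma inter24 (v : M a × M a × M a) (hA : v ∈ F2 a ha) (hB : v ∈ F4 a ha) : False := by
  obtain ⟨g1, g2, g3, g4, g5, g6, g7, g8, g9, g10, g11, g12, g13⟩ := hA
  obtain ⟨k1, k2, k3, k4, k5, k6, k7, k8, k9, k10, k11, k12⟩ := hB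
  exact nb1 a ha k2 g2

lemma E01_ne_E12 : E01 a ha ≠ E12 a ha := by
  intro hc
  have xx : blkT a ha 1 := ⟨⟨0, ha 1⟩,
    mem_fac_of_fst a ha 1 (by decide) (by decide) (by decide) _⟩
  have hcd := congrArg (fun m : M a × M a × M a => cd a ha m.1 ⟨1, xx.1⟩ xx.2) hc
  simp only [E01, E12, cd_pick1] at hcd
  exact absurd hcd (by decide)

lemma E12_ne_E23 : E12 a ha ≠ E23 a ha := by
  intro hc
  have xx : blkT a ha 0 := ⟨⟨0, ha 0⟩,
    mem_fac_of_fst a ha 0 (by decide) (by decide) (by decide) _⟩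
  have hcd := congrArg (fun m : M a × M a × M a => cd a ha m.2.1 ⟨0, xx.1⟩ xx.2) hc
  simp only [E12, E23, cd_pick0] at hcd
  exact absurd hcd (by decide)

lemma E23_ne_E34 : E23 a ha ≠ E34 a ha := by
  intro hc
  have xx : blkT a ha 1 := ⟨⟨0, ha 1⟩,
    mem_fac_of_fst a ha 1 (by decide) (by decide) (by decide) _⟩
  have hcd := congrArg (fun m : M a × M a × M a => cd a ha m.1 ⟨1, xx.1⟩ xx.2) hc
  simp only [E23, E34, cd_pick1] at hcd
  exact absurd hcd (by decide)

lemma E34_ne_E40 : E34 a ha ≠ E40 a ha := by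
  intro hc
  have xx : blkT a ha 0 := ⟨⟨0, ha 0⟩,
    mem_fac_of_fst a ha 0 (by decide) (by decide) (by decide) _⟩
  have hcd := congrArg (fun m : M a × M a × M a => cd a ha m.2.1 ⟨0, xx.1⟩ xx.2) hc
  simp only [E34, E40, cd_pick0] at hcd
  exact absurd hcd (by decide)

lemma ncard_F0 : (F0 a ha).ncard = 2 ^ (a 0 + a 3 - 1) := by
  rw [← range_Psi0 a ha, ← Set.image_univ,
    Set.ncard_image_of_injective _ (psi0_inj a ha), Set.ncard_univ,
    Nat.card_eq_fintype_card, Fintype.card_prod, Fintype.card_fun, Fintype.card_fun,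
    card_blkT_01 a ha 0 (by decide) (by decide) (by decide),
    card_blkT_234 a ha 3 (by decide), ZMod.card, ← pow_add]
  congr 1
  have := ha 3
  omega

lemma ncard_F1 : (F1 a ha).ncard = 2 ^ (a 1 + a 4 - 1) := by
  rw [← range_Psi1 a ha, ← Set.image_univ,
    Set.ncard_image_of_injective _ (psi1_inj a ha), Set.ncard_univ,
    Nat.card_eq_fintype_card, Fintype.card_prod, Fintype.card_fun, Fintype.card_fun,
    card_blkT_01 a ha 1 (by decide) (by decide) (by decide),
    card_blkT_234 a ha 4 (by decide), ZMod.card, ← pow_add]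
  congr 1
  have := ha 4
  omega

lemma ncard_F2 : (F2 a ha).ncard = 2 ^ (a 2 + a 0 - 1) := by
  rw [← range_Psi2 a ha, ← Set.image_univ,
    Set.ncard_image_of_injective _ (psi2_inj a ha), Set.ncard_univ,
    Nat.card_eq_fintype_card, Fintype.card_prod, Fintype.card_fun, Fintype.card_fun,
    card_blkT_01 a ha 0 (by decide) (by decide) (by decide),
    card_blkT_234 a ha 2 (by decide), ZMod.card, ← pow_add]
  congr 1
  have := ha 2
  omega

lemma ncard_F3 : (F3 a ha).ncard = 2 ^ (a 3 + a 1 - 1) := by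
  rw [← range_Psi3 a ha, ← Set.image_univ,
    Set.ncard_image_of_injective _ (psi3_inj a ha), Set.ncard_univ,
    Nat.card_eq_fintype_card, Fintype.card_prod, Fintype.card_fun, Fintype.card_fun,
    card_blkT_01 a ha 1 (by decide) (by decide) (by decide),
    card_blkT_234 a ha 3 (by decide), ZMod.card, ← pow_add]
  congr 1
  have := ha 3
  omega

lemma ncard_F4 : (F4 a ha).ncard = 2 ^ (a 4 + a 2 - 1) := by
  rw [← range_Psi4 a ha, ← Set.image_univ,
    Set.ncard_image_of_injective _ (psi4_inj a ha), Set.ncard_univ,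
    Nat.card_eq_fintype_card, Fintype.card_prod, Fintype.card_prod,
    Fintype.card_fun, Fintype.card_fun,
    card_blkT_234 a ha 2 (by decide), card_blkT_234 a ha 4 (by decide),
    ZMod.card, Fintype.card_bool]
  have h2 := ha 2
  have h4 := ha 4
  rw [show a 4 + a 2 - 1 = (a 2 - 1) + (a 4 - 1) + 1 from by omega, pow_add, pow_add,
    pow_one]
  ring

lemma ncard_U :
    (F0 a ha ∪ (F1 a ha ∪ (F2 a ha ∪ (F3 a ha ∪ F4 a ha)))).ncard
      = 2 ^ (a 0 + a 3 - 1) + 2 ^ (a 1 + a 4 - 1) + 2 ^ (a 2 + a 0 - 1)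
        + 2 ^ (a 3 + a 1 - 1) + 2 ^ (a 4 + a 2 - 1) - 5 := by
  classical
  set G1 := F1 a ha \ {E01 a ha} with hG1
  set G2 := F2 a ha \ {E12 a ha} with hG2
  set G3 := F3 a ha \ {E23 a ha} with hG3
  set G4 := F4 a ha \ ({E34 a ha, E40 a ha} : Set (M a × M a × M a)) with hG4
  have hU : F0 a ha ∪ (F1 a ha ∪ (F2 a ha ∪ (F3 a ha ∪ F4 a ha)))
      = F0 a ha ∪ (G1 ∪ (G2 ∪ (G3 ∪ G4))) := by
    apply Set.Subset.antisymm
    · rintro v (h | h | h | h | h)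
      · exact Or.inl h
      · by_cases hv : v = E01 a ha
        · exact Or.inl (hv ▸ E01_mem_F0 a ha)
        · exact Or.inr (Or.inl ⟨h, hv⟩)
      · by_cases hv : v = E12 a ha
        · refine Or.inr (Or.inl ⟨hv ▸ E12_mem_F1 a ha, ?_⟩)
          rw [hv]
          exact fun hc => E01_ne_E12 a ha (Set.mem_singleton_iff.1 hc).symm
        · exact Or.inr (Or.inr (Or.inl ⟨h, hv⟩))
      · by_cases hv : v = E23 a ha
        · refine Or.inr (Or.inr (Or.inl ⟨hv ▸ E23_mem_F2 a ha, ?_⟩))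
          rw [hv]
          exact fun hc => E12_ne_E23 a ha (Set.mem_singleton_iff.1 hc).symm
        · exact Or.inr (Or.inr (Or.inr (Or.inl ⟨h, hv⟩)))
      · by_cases hv34 : v = E34 a ha
        · refine Or.inr (Or.inr (Or.inr (Or.inl ⟨hv34 ▸ E34_mem_F3 a ha, ?_⟩)))
          rw [hv34]
          exact fun hc => E23_ne_E34 a ha (Set.mem_singleton_iff.1 hc).symm
        · by_cases hv40 : v = E40 a ha
          · exact Or.inl (hv40 ▸ E40_mem_F0 a ha)
          · refine Or.inr (Or.inr (Or.inr (Or.inr ⟨h, ?_⟩)))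
            intro hc
            rcases hc with hc | hc
            · exact hv34 hc
            · exact hv40 hc
    · rintro v (h | h | h | h | h)
      · exact Or.inl h
      · exact Or.inr (Or.inl h.1)
      · exact Or.inr (Or.inr (Or.inl h.1))
      · exact Or.inr (Or.inr (Or.inr (Or.inl h.1)))
      · exact Or.inr (Or.inr (Or.inr (Or.inr h.1)))
  rw [hU]
  have d34 : Disjoint G3 G4 := by
    rw [Set.disjoint_left]
    intro v hv3 hv4
    exact hv4.2 (Or.inl (inter34 a ha v hv3.1 hv4.1))
  have d24 : Disjoint G2 (G3 ∪ G4) := by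
    rw [Set.disjoint_union_right]
    constructor <;> rw [Set.disjoint_left] <;> intro v hv2 hvx
    · exact hvx.2 (Set.mem_singleton_iff.2 (inter23 a ha v hv2.1 hvx.1))
    · exact inter24 a ha v hv2.1 hvx.1
  have d14 : Disjoint G1 (G2 ∪ (G3 ∪ G4)) := by
    rw [Set.disjoint_union_right, Set.disjoint_union_right]
    refine ⟨?_, ?_, ?_⟩ <;> rw [Set.disjoint_left] <;> intro v hv1 hvx
    · exact hvx.2 (Set.mem_singleton_iff.2 (inter12 a ha v hv1.1 hvx.1))
    · exact inter13 a ha v hv1.1 hvx.1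
    · exact inter14 a ha v hv1.1 hvx.1
  have d04 : Disjoint (F0 a ha) (G1 ∪ (G2 ∪ (G3 ∪ G4))) := by
    rw [Set.disjoint_union_right, Set.disjoint_union_right, Set.disjoint_union_right]
    refine ⟨?_, ?_, ?_, ?_⟩ <;> rw [Set.disjoint_left] <;> intro v hv0 hvx
    · exact hvx.2 (Set.mem_singleton_iff.2 (inter01 a ha v hv0 hvx.1))
    · exact inter02 a ha v hv0 hvx.1
    · exact inter03 a ha v hv0 hvx.1
    · exact hvx.2 (Or.inr (inter40 a ha v hvx.1 hv0))
  rw [Set.ncard_union_eq d04 (Set.toFinite _) (Set.toFinite _),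
    Set.ncard_union_eq d14 (Set.toFinite _) (Set.toFinite _),
    Set.ncard_union_eq d24 (Set.toFinite _) (Set.toFinite _),
    Set.ncard_union_eq d34 (Set.toFinite _) (Set.toFinite _)]
  have hc1 : G1.ncard = 2 ^ (a 1 + a 4 - 1) - 1 := by
    rw [hG1, Set.ncard_diff_singleton_of_mem (E01_mem_F1 a ha),
      ncard_F1 a ha]
  have hc2 : G2.ncard = 2 ^ (a 2 + a 0 - 1) - 1 := by
    rw [hG2, Set.ncard_diff_singleton_of_mem (E12_mem_F2 a ha),
      ncard_F2 a ha]
  have hc3 : G3.ncard = 2 ^ (a 3 + a 1 - 1) - 1 := by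
    rw [hG3, Set.ncard_diff_singleton_of_mem (E23_mem_F3 a ha),
      ncard_F3 a ha]
  have hc4 : G4.ncard = 2 ^ (a 4 + a 2 - 1) - 2 := by
    have hsub : ({E34 a ha, E40 a ha} : Set (M a × M a × M a)) ⊆ F4 a ha := by
      rintro v (rfl | rfl)
      · exact E34_mem_F4 a ha
      · exact E40_mem_F4 a ha
    rw [hG4, Set.ncard_diff hsub (Set.toFinite _), ncard_F4 a ha,
      Set.ncard_pair (E34_ne_E40 a ha)]
  rw [hc1, hc2, hc3, hc4, ncard_F0 a ha]
  have k0 : 1 ≤ 2 ^ (a 0 + a 3 - 1) := Nat.one_le_pow _ _ (by norm_num)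
  have k1 : 1 ≤ 2 ^ (a 1 + a 4 - 1) := Nat.one_le_pow _ _ (by norm_num)
  have k2 : 1 ≤ 2 ^ (a 2 + a 0 - 1) := Nat.one_le_pow _ _ (by norm_num)
  have k3 : 1 ≤ 2 ^ (a 3 + a 1 - 1) := Nat.one_le_pow _ _ (by norm_num)
  have k4 : (2 : ℕ) ^ 1 ≤ 2 ^ (a 4 + a 2 - 1) := by
    apply Nat.pow_le_pow_right (by norm_num)
    have := ha 4
    have := ha 2
    omega
  rw [pow_one] at k4
  omega

def orb (lam : W a → M a) : Set (W a → M a) :=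
  {lam' | ∃ g : M a ≃ₗ[ZMod 2] M a, ∀ w, lam' w = g (lam w)}

lemma orb_eq_of (g : M a ≃ₗ[ZMod 2] M a) (lam : W a → M a) :
    orb a (fun w => g (lam w)) = orb a lam := by
  ext lam'
  constructor
  · rintro ⟨h, hh⟩
    exact ⟨g.trans h, fun w => by rw [hh w]; rfl⟩
  · rintro ⟨h, hh⟩
    refine ⟨(g.symm.trans h : M a ≃ₗ[ZMod 2] M a), fun w => ?_⟩
    rw [hh w]
    show h (lam w) = h (g.symm (g (lam w)))
    rw [g.symm_apply_apply]

lemma ns_comp (g : M a ≃ₗ[ZMod 2] M a) (lam : W a → M a)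
    (h : IsNonsingularZ2 a lam) : IsNonsingularZ2 a (fun w => g (lam w)) := by
  intro σ hσ
  have := (h σ hσ).map' g.toLinearMap (LinearEquiv.ker g)
  exact this

def Norm : Set (W a → M a) :=
  {lam | IsNonsingularZ2 a lam ∧
    ∀ ws : {w : W a // w ∈ fac a ha}, lam ↑ws = Pi.single (ee a ha ws) 1}

lemma SS_eq :
    {C : Set (W a → M a) | ∃ lam, IsNonsingularZ2 a lam ∧ C = orb a lam}
      = orb a '' Norm a ha := by
  ext C
  constructor
  · rintro ⟨lam, hns, rfl⟩
    have hli := hns (fac a ha) (fac_mem_wedge a ha)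
    have hcard : Fintype.card {w : W a // w ∈ fac a ha}
        = Module.finrank (ZMod 2) (M a) := by
      rw [Fintype.card_coe, card_fac, Module.finrank_fintype_fun_eq_card,
        Fintype.card_fin]
    have hne : (fac a ha).Nonempty := by
      apply Finset.card_pos.1
      rw [card_fac a ha]
      have := sum_ge_five a ha
      show 0 < (∑ i : ZMod 5, a i) - 3
      omega
    haveI : Nonempty {w : W a // w ∈ fac a ha} :=
      ⟨⟨hne.choose, hne.choose_spec⟩⟩
    set b1 := basisOfLinearIndependentOfCardEqFinrank hli hcard with hb1
    set b2 : Module.Basis {w : W a // w ∈ fac a ha} (ZMod 2) (M a) :=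
      (Pi.basisFun (ZMod 2) (Fin (nn a))).reindex (ee a ha).symm with hb2
    set g := b1.equiv b2 (Equiv.refl _) with hg
    refine ⟨fun w => g (lam w), ⟨ns_comp a g lam hns, ?_⟩, orb_eq_of a g lam⟩
    intro ws
    have h1 : b1 ws = lam ↑ws :=
      congrFun (coe_basisOfLinearIndependentOfCardEqFinrank hli hcard) ws
    have h2 : g (b1 ws) = b2 ws := by
      rw [hg, Module.Basis.equiv_apply]
      rfl
    have h3 : b2 ws = Pi.single (ee a ha ws) 1 := by
      rw [hb2, Module.Basis.reindex_apply, Equiv.symm_symm, Pi.basisFun_apply]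
    show g (lam ↑ws) = Pi.single (ee a ha ws) 1
    rw [← h1, h2, h3]
  · rintro ⟨lam, hlam, rfl⟩
    exact ⟨lam, hlam.1, rfl⟩

lemma orb_injOn : Set.InjOn (orb a) (Norm a ha) := by
  intro lam hlam lam' hlam' heq
  have hmem : lam' ∈ orb a lam := by
    rw [heq]
    exact ⟨LinearEquiv.refl _ _, fun w => rfl⟩
  obtain ⟨g, hg⟩ := hmem
  have hfix : ∀ k : Fin (nn a), g (Pi.single k 1) = (Pi.single k 1 : M a) := by
    intro k
    have h1 := hg ↑((ee a ha).symm k)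
    rw [hlam'.2 ((ee a ha).symm k), hlam.2 ((ee a ha).symm k),
      (ee a ha).apply_symm_apply] at h1
    exact h1.symm
  have hgid : g.toLinearMap = LinearMap.id := by
    apply Module.Basis.ext (Pi.basisFun (ZMod 2) (Fin (nn a)))
    intro k
    rw [Pi.basisFun_apply]
    exact hfix k
  funext w
  have : g (lam w) = lam w := by
    have := congrFun (congrArg (fun f => f.toFun) hgid) (lam w)
    exact this
  rw [hg w, this]

lemma Phi_injective : Function.Injective (Phi a ha) := by
  intro v v' h
  refine Prod.ext ?_ (Prod.ext ?_ ?_)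
  · have := congrFun h (wt a ha 2)
    rwa [Phi_wt2, Phi_wt2] at this
  · have := congrFun h (wt a ha 3)
    rwa [Phi_wt3, Phi_wt3] at this
  · have := congrFun h (wt a ha 4)
    rwa [Phi_wt4, Phi_wt4] at this

lemma Norm_eq : Norm a ha = Phi a ha '' {v | Crit a ha v} := by
  ext lam
  constructor
  · rintro ⟨hns, hnorm⟩
    have hlam : lam = Phi a ha (lam (wt a ha 2), lam (wt a ha 3), lam (wt a ha 4)) := by
      funext w
      by_cases hw : w ∈ fac a ha
      · rw [Phi_mem a ha _ w hw]
        exact hnorm ⟨w, hw⟩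
      · obtain h2 | h3 | h4 := (not_mem_fac_iff a ha w).1 hw
        · rw [h2, Phi_wt2]
        · rw [h3, Phi_wt3]
        · rw [h4, Phi_wt4]
    refine ⟨(lam (wt a ha 2), lam (wt a ha 3), lam (wt a ha 4)), ?_, hlam.symm⟩
    apply crit_of_nonsingular
    rw [← hlam]
    exact hns
  · rintro ⟨v, hv, rfl⟩
    refine ⟨nonsingular_of_crit a ha v hv, ?_⟩
    intro ws
    exact Phi_mem a ha v ↑ws ws.2

lemma crit_set_eq :
    {v : M a × M a × M a | Crit a ha v}
      = F0 a ha ∪ (F1 a ha ∪ (F2 a ha ∪ (F3 a ha ∪ F4 a ha))) := by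
  ext v
  constructor
  · intro hv
    rcases mem_of_crit a ha v hv with h | h | h | h | h
    · exact Or.inl h
    · exact Or.inr (Or.inl h)
    · exact Or.inr (Or.inr (Or.inl h))
    · exact Or.inr (Or.inr (Or.inr (Or.inl h)))
    · exact Or.inr (Or.inr (Or.inr (Or.inr h)))
  · rintro (h | h | h | h | h)
    · exact crit_of_mem_F0 a ha v h
    · exact crit_of_mem_F1 a ha v h
    · exact crit_of_mem_F2 a ha v h
    · exact crit_of_mem_F3 a ha v h
    · exact crit_of_mem_F4 a ha v h

include ha in
lemma main_count :
    Set.ncard {C : Set (W a → M a) | ∃ lam, IsNonsingularZ2 a lam ∧ C = orb a lam}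
      = (∑ i : ZMod 5, 2 ^ (a i + a (i + 3) - 1)) - 5 := by
  rw [SS_eq a ha, Set.ncard_image_of_injOn (orb_injOn a ha), Norm_eq a ha,
    Set.ncard_image_of_injective _ (Phi_injective a ha), crit_set_eq a ha,
    ncard_U a ha]
  have huniv : (Finset.univ : Finset (ZMod 5)) = {0, 1, 2, 3, 4} := by decide
  rw [huniv, Finset.sum_insert (by decide), Finset.sum_insert (by decide),
    Finset.sum_insert (by decide), Finset.sum_insert (by decide),
    Finset.sum_singleton]
  rw [show ((0 : ZMod 5) + 3) = 3 from by decide, show ((1 : ZMod 5) + 3) = 4 from by decide,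
    show ((2 : ZMod 5) + 3) = 0 from by decide, show ((3 : ZMod 5) + 3) = 1 from by decide,
    show ((4 : ZMod 5) + 3) = 2 from by decide]
  omega

end PW

/-- The number of Davis–Januszkiewicz equivalence classes (orbits under automorphisms of
`ℤ₂ⁿ`, `n = a₁ + ⋯ + a₅ − 3`) of small covers over `P₅(a₁,…,a₅) = [a₁,a₃,a₅,a₂,a₄]` is
`2^{a₁+a₄−1} + 2^{a₂+a₅−1} + 2^{a₃+a₁−1} + 2^{a₄+a₂−1} + 2^{a₅+a₃−1} − 5`. -/
theorem count_DJ_classes_over_pentagon_wedge (a : ZMod 5 → ℕ) (ha : ∀ i, 0 < a i) :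
    Set.ncard
      {C : Set ((Σ i : ZMod 5, Fin (a i)) → (Fin ((∑ i : ZMod 5, a i) - 3) → ZMod 2)) |
        ∃ lam, IsNonsingularZ2 a lam ∧
          C = {lam' | ∃ g : (Fin ((∑ i : ZMod 5, a i) - 3) → ZMod 2) ≃ₗ[ZMod 2]
                (Fin ((∑ i : ZMod 5, a i) - 3) → ZMod 2),
              ∀ w, lam' w = g (lam w)}} =
      (∑ i : ZMod 5, 2 ^ (a i + a (i + 3) - 1)) - 5 :=
  PW.main_count a ha
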